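/- Let L1 and L2 be nontrivial compatible finite groups. If for every Sims pair (K1, K2) of (L1, L2) one has Rad(K1) = 1 or Rad(K2) = 1, then there exist normal subgroups M1 ⊴ L1 and M2 ⊴ L2 such that M1 and M2 are nontrivial and isomorphic, and L1/M1 and L2/M2 are compatible. -/

import Mathlib

set_option linter.unusedSectionVars false
set_option linter.unusedVariables false
set_option maxHeartbeats 1000000


/-- Two finite groups `L1` and `L2` are compatible if some finite group `G` has
isomorphic normal subgroups `N1 ≅ N2` with `G ⧸ N1 ≅ L1` and `G ⧸ N2 ≅ L2`. -/
def Compatible (L1 : Type) [Group L1] (L2 : Type) [Group L2] : Prop :=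
  ∃ (G : Type) (_ : Group G) (_ : Finite G) (N1 N2 : Subgroup G)
    (h1 : N1.Normal) (h2 : N2.Normal),
    Nonempty (↥N1 ≃* ↥N2) ∧
      (letI := h1; letI := h2;
        Nonempty ((G ⧸ N1) ≃* L1) ∧ Nonempty ((G ⧸ N2) ≃* L2))

/-- `(M1, M2)` is a Sims pair for `(L1, L2)`: `M1 ⊴ L1` and `M2 ⊴ L2` are compatible
and `L1 ⧸ M1 ≅ L2 ⧸ M2` is nontrivial. -/
def IsSimsPair (L1 : Type) [Group L1] (L2 : Type) [Group L2]
    (M1 : Subgroup L1) (M2 : Subgroup L2) : Prop :=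
  ∃ (h1 : M1.Normal) (h2 : M2.Normal),
    Compatible ↥M1 ↥M2 ∧
      (letI := h1; letI := h2;
        Nonempty ((L1 ⧸ M1) ≃* (L2 ⧸ M2)) ∧ Nontrivial (L1 ⧸ M1))

/-- The solvable radical `Rad(G)`: the subgroup generated by all solvable normal
subgroups of `G`. -/
def solvableRadical (G : Type) [Group G] : Subgroup G :=
  sSup {A : Subgroup G | A.Normal ∧ IsSolvable ↥A}


namespace SimsProof

variable {G : Type*} [Group G]


variable {G : Type*} [Group G]

/-- `A` is normal in `B` (both subgroups of an ambient group). -/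
def NormalIn (A B : Subgroup G) : Prop :=
  A ≤ B ∧ ∀ b ∈ B, ∀ a ∈ A, b * a * b⁻¹ ∈ A

theorem NormalIn.le {A B : Subgroup G} (h : NormalIn A B) : A ≤ B := h.1

theorem NormalIn.conj_mem {A B : Subgroup G} (h : NormalIn A B) {b : G} (hb : b ∈ B)
    {a : G} (ha : a ∈ A) : b * a * b⁻¹ ∈ A := h.2 b hb a ha

theorem normalIn_refl (A : Subgroup G) : NormalIn A A :=
  ⟨le_rfl, fun b hb a ha => A.mul_mem (A.mul_mem hb ha) (A.inv_mem hb)⟩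

theorem NormalIn.of_normal {A : Subgroup G} (hA : A.Normal) (B : Subgroup G) (hle : A ≤ B) :
    NormalIn A B := ⟨hle, fun b _ a ha => hA.conj_mem a ha b⟩

theorem NormalIn.inf_right {A B : Subgroup G} (h : NormalIn A B) (C : Subgroup G) :
    NormalIn (A ⊓ C) (B ⊓ C) := by
  refine ⟨inf_le_inf_right C h.1, ?_⟩
  rintro b ⟨hbB, hbC⟩ a ⟨haA, haC⟩
  exact ⟨h.2 b hbB a haA, C.mul_mem (C.mul_mem hbC haC) (C.inv_mem hbC)⟩

/-- Subnormality relation between subgroups of a common ambient group. -/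
inductive Subnormal : Subgroup G → Subgroup G → Prop
  | refl (A : Subgroup G) : Subnormal A A
  | step {A B C : Subgroup G} : Subnormal A B → NormalIn B C → Subnormal A C

theorem Subnormal.le {A B : Subgroup G} (h : Subnormal A B) : A ≤ B := by
  induction h with
  | refl => exact le_rfl
  | step _ h2 ih => exact ih.trans h2.1

theorem Subnormal.of_normalIn {A B : Subgroup G} (h : NormalIn A B) : Subnormal A B :=
  (Subnormal.refl A).step h

theorem Subnormal.trans {A B C : Subgroup G} (h1 : Subnormal A B) (h2 : Subnormal B C) :
    Subnormal A C := by
  induction h2 with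
  | refl => exact h1
  | step _ h ih => exact ih.step h

theorem Subnormal.inf_right {A B : Subgroup G} (h : Subnormal A B) (C : Subgroup G) :
    Subnormal (A ⊓ C) (B ⊓ C) := by
  induction h with
  | refl => exact Subnormal.refl _
  | step _ h ih => exact ih.step (h.inf_right C)

/-- If `Q ⊴⊴ B` and `Q ≤ C ≤ B`... transfer through an inf. -/
theorem Subnormal.of_le_inf {Q B C : Subgroup G} (h : Subnormal Q B) (hQC : Q ≤ C) :
    Subnormal Q (B ⊓ C) := by
  have := h.inf_right C
  rwa [inf_eq_left.2 hQC] at this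

theorem Subnormal.bot_of_le_bot {A B : Subgroup G} (h : A ≤ (⊥ : Subgroup G)) : A = ⊥ :=
  le_bot_iff.mp h





/-- transfer solvability along a `MulEquiv`. -/
theorem isSolvable_of_mulEquiv {H H' : Type*} [Group H] [Group H'] (e : H ≃* H')
    (h : IsSolvable H) : IsSolvable H' := by
  haveI : Group.IsSolvable H := h
  exact solvable_of_surjective (f := e.toMonoidHom) e.surjective

theorem normalIn_iff_subgroupOf_normal {A K : Subgroup G} (hle : A ≤ K) :
    NormalIn A K ↔ (A.subgroupOf K).Normal := by
  constructor
  · intro h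
    constructor
    rintro ⟨a, haK⟩ ha ⟨b, hbK⟩
    simp only [Subgroup.mem_subgroupOf] at ha ⊢
    exact h.2 b hbK a ha
  · intro h
    refine ⟨hle, fun b hb a ha => ?_⟩
    have := h.conj_mem ⟨a, hle ha⟩ (by simpa [Subgroup.mem_subgroupOf] using ha) ⟨b, hb⟩
    simpa [Subgroup.mem_subgroupOf] using this

theorem NormalIn.of_le {A B K : Subgroup G} (h : NormalIn A B) (hK : K ≤ B) (hAK : A ≤ K) :
    NormalIn A K := ⟨hAK, fun b hb a ha => h.2 b (hK hb) a ha⟩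

theorem NormalIn.map_conj_eq {A K : Subgroup G} (h : NormalIn A K) {b : G} (hb : b ∈ K) :
    A.map (MulAut.conj b).toMonoidHom = A := by
  apply le_antisymm
  · rintro x hx
    obtain ⟨a, ha, rfl⟩ := Subgroup.mem_map.mp hx
    simpa [MulAut.conj] using h.2 b hb a ha
  · intro a ha
    refine Subgroup.mem_map.mpr ⟨b⁻¹ * a * b, ?_, by simp [MulAut.conj]; group⟩
    simpa using h.2 b⁻¹ (K.inv_mem hb) a ha

theorem normalIn_of_map_conj {A K : Subgroup G} (hle : A ≤ K)
    (h : ∀ b ∈ K, A.map (MulAut.conj b).toMonoidHom ≤ A) : NormalIn A K := by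
  refine ⟨hle, fun b hb a ha => ?_⟩
  have := h b hb (Subgroup.mem_map.mpr ⟨a, ha, rfl⟩)
  simpa [MulAut.conj] using this

theorem NormalIn.sup {A B K : Subgroup G} (hA : NormalIn A K) (hB : NormalIn B K) :
    NormalIn (A ⊔ B) K := by
  refine normalIn_of_map_conj (sup_le hA.1 hB.1) (fun b hb => ?_)
  rw [Subgroup.map_sup, hA.map_conj_eq hb, hB.map_conj_eq hb]

/-- solvability of a join with one side normal (in-group version). -/
theorem isSolvable_sup {H : Type*} [Group H] (A B : Subgroup H) [hn : A.Normal]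
    (hA : IsSolvable ↥A) (hB : IsSolvable ↥B) : IsSolvable ↥(A ⊔ B) := by
  rw [sup_comm]
  haveI : Group.IsSolvable ↥B := hB
  haveI : Group.IsSolvable ↥(A.subgroupOf (B ⊔ A)) :=
    isSolvable_of_mulEquiv (Subgroup.subgroupOfEquivOfLe le_sup_right).symm hA
  haveI : Group.IsSolvable (↥(B ⊔ A) ⧸ A.subgroupOf (B ⊔ A)) := by
    have e := QuotientGroup.quotientInfEquivProdNormalQuotient B A
    haveI : Group.IsSolvable (↥B ⧸ A.subgroupOf B) := inferInstance
    exact isSolvable_of_mulEquiv e this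
  exact solvable_of_ker_le_range (A.subgroupOf (B ⊔ A)).subtype
    (QuotientGroup.mk' (A.subgroupOf (B ⊔ A)))
    (by rw [QuotientGroup.ker_mk', Subgroup.range_subtype])



theorem isSolvable_sup_rel {A B M : Subgroup G} (hA : NormalIn A M) (hB : NormalIn B M)
    (sA : IsSolvable ↥A) (sB : IsSolvable ↥B) : IsSolvable ↥(A ⊔ B) := by
  haveI : (A.subgroupOf M).Normal := (normalIn_iff_subgroupOf_normal hA.1).mp hA
  haveI sA' : IsSolvable ↥(A.subgroupOf M) :=
    isSolvable_of_mulEquiv (Subgroup.subgroupOfEquivOfLe hA.1).symm sA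
  haveI sB' : IsSolvable ↥(B.subgroupOf M) :=
    isSolvable_of_mulEquiv (Subgroup.subgroupOfEquivOfLe hB.1).symm sB
  have key : IsSolvable ↥(A.subgroupOf M ⊔ B.subgroupOf M) := isSolvable_sup _ _ sA' sB'
  rw [← Subgroup.subgroupOf_sup hA.1 hB.1] at key
  exact isSolvable_of_mulEquiv (Subgroup.subgroupOfEquivOfLe (sup_le hA.1 hB.1)) key

section RadIn
variable [Finite G]

def radSet (M : Subgroup G) : Set (Subgroup G) := {B | NormalIn B M ∧ IsSolvable ↥B}

noncomputable def radIn (M : Subgroup G) : Subgroup G := sSup (radSet M)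

theorem bot_mem_radSet (M : Subgroup G) : ⊥ ∈ radSet M := by
  refine ⟨⟨bot_le, fun b _ a ha => ?_⟩, (inferInstance : Group.IsSolvable ↥(⊥ : Subgroup G))⟩
  simp only [Subgroup.mem_bot] at ha ⊢
  simp [ha]

theorem sup_mem_radSet {M A B : Subgroup G} (hA : A ∈ radSet M) (hB : B ∈ radSet M) :
    A ⊔ B ∈ radSet M :=
  ⟨hA.1.sup hB.1, isSolvable_sup_rel hA.1 hB.1 hA.2 hB.2⟩

theorem radIn_mem (M : Subgroup G) : radIn M ∈ radSet M := by
  obtain ⟨Mx, hMx, hmax⟩ := Set.Finite.exists_maximalFor id (radSet M) (Set.toFinite _)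
    ⟨⊥, bot_mem_radSet M⟩
  have hsup : radIn M = Mx := by
    apply le_antisymm
    · apply sSup_le
      intro B hB
      have h1 : B ⊔ Mx ∈ radSet M := sup_mem_radSet hB hMx
      have h2 : Mx = B ⊔ Mx := le_antisymm le_sup_right (hmax h1 le_sup_right)
      rw [h2]; exact le_sup_left
    · exact le_sSup hMx
  rw [hsup]; exact hMx

theorem radIn_le (M : Subgroup G) : radIn M ≤ M := sSup_le (fun B hB => hB.1.1)

theorem le_radIn {M B : Subgroup G} (h : B ∈ radSet M) : B ≤ radIn M := le_sSup h

end RadIn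

section Bridge
variable {G : Type} [Group G] [Finite G]

theorem map_subtype_mem_radSet {M : Subgroup G} (X : Subgroup ↥M) [hX : X.Normal]
    (sX : IsSolvable ↥X) : Subgroup.map M.subtype X ∈ radSet M := by
  constructor
  · refine ⟨Subgroup.map_subtype_le X, fun b hb a ha => ?_⟩
    obtain ⟨a', ha', rfl⟩ := Subgroup.mem_map.mp ha
    exact Subgroup.mem_map.mpr ⟨⟨b, hb⟩ * a' * ⟨b, hb⟩⁻¹, hX.conj_mem a' ha' ⟨b, hb⟩, rfl⟩
  · exact isSolvable_of_mulEquiv (Subgroup.equivMapOfInjective X M.subtype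
      (Subgroup.subtype_injective M)) sX

theorem bridge (M : Subgroup G) :
    Subgroup.map M.subtype (solvableRadical ↥M) = radIn M := by
  apply le_antisymm
  · rw [Subgroup.map_le_iff_le_comap]
    apply sSup_le
    rintro X ⟨hX1, hX2⟩
    rw [← Subgroup.map_le_iff_le_comap]
    exact le_radIn (map_subtype_mem_radSet X (hX := hX1) hX2)
  · apply sSup_le
    rintro B ⟨hB1, hB2⟩
    haveI := (normalIn_iff_subgroupOf_normal hB1.1).mp hB1
    have h1 : B.subgroupOf M ≤ solvableRadical ↥M :=
      le_sSup ⟨inferInstance, isSolvable_of_mulEquiv (Subgroup.subgroupOfEquivOfLe hB1.1).symm hB2⟩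
    calc B = Subgroup.map M.subtype (B.subgroupOf M) := by
              rw [Subgroup.subgroupOf_map_subtype, inf_eq_left.mpr hB1.1]
      _ ≤ _ := Subgroup.map_mono h1

theorem sRad_eq_bot_iff (M : Subgroup G) : solvableRadical ↥M = ⊥ ↔ radIn M = ⊥ := by
  constructor
  · intro h; rw [← bridge, h, Subgroup.map_bot]
  · intro h
    have := bridge M
    rw [h, Subgroup.map_eq_bot_iff, Subgroup.ker_subtype, le_bot_iff] at this
    exact this

theorem map_map_symm {H H' : Type} [Group H] [Group H'] (e : H ≃* H') (K : Subgroup H') :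
    Subgroup.map e.toMonoidHom (Subgroup.map e.symm.toMonoidHom K) = K := by
  ext x
  simp only [Subgroup.mem_map, MulEquiv.coe_toMonoidHom]
  constructor
  · rintro ⟨y, ⟨z, hz, rfl⟩, rfl⟩; simpa using hz
  · intro hx; exact ⟨e.symm x, ⟨x, hx, rfl⟩, by simp⟩

theorem sRad_map_le {H H' : Type} [Group H] [Group H'] (e : H ≃* H') :
    Subgroup.map e.toMonoidHom (solvableRadical H) ≤ solvableRadical H' := by
  rw [Subgroup.map_le_iff_le_comap]
  apply sSup_le
  rintro X ⟨hX1, hX2⟩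
  rw [← Subgroup.map_le_iff_le_comap]
  exact le_sSup ⟨hX1.map e.toMonoidHom e.surjective,
    isSolvable_of_mulEquiv (Subgroup.equivMapOfInjective X e.toMonoidHom e.injective) hX2⟩

theorem sRad_map_eq {H H' : Type} [Group H] [Group H'] (e : H ≃* H') :
    Subgroup.map e.toMonoidHom (solvableRadical H) = solvableRadical H' := by
  apply le_antisymm (sRad_map_le e)
  have h2 := sRad_map_le e.symm
  calc solvableRadical H' = Subgroup.map e.toMonoidHom
        (Subgroup.map e.symm.toMonoidHom (solvableRadical H')) := (map_map_symm e _).symm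
    _ ≤ _ := Subgroup.map_mono h2

theorem sRad_eq_bot_of_mulEquiv {H H' : Type} [Group H] [Group H'] (e : H ≃* H')
    (h : solvableRadical H = ⊥) : solvableRadical H' = ⊥ := by
  rw [← sRad_map_eq e, h, Subgroup.map_bot]

end Bridge



section Transfer

variable {G : Type} [Group G] {N1 N2 : Subgroup G}

/-- Transfer of a subgroup along an isomorphism `φ : N1 ≃* N2`. -/
def trf (φ : ↥N1 ≃* ↥N2) (X : Subgroup G) : Subgroup G :=
  (X.subgroupOf N1).map (N2.subtype.comp φ.toMonoidHom)

theorem mem_trf {φ : ↥N1 ≃* ↥N2} {X : Subgroup G} {y : G} :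
    y ∈ trf φ X ↔ ∃ a : ↥N1, (a : G) ∈ X ∧ ((φ a : ↥N2) : G) = y := by
  simp [trf, Subgroup.mem_map, Subgroup.mem_subgroupOf]

theorem trf_le_right (φ : ↥N1 ≃* ↥N2) (X : Subgroup G) : trf φ X ≤ N2 := by
  rintro y hy
  obtain ⟨a, _, rfl⟩ := mem_trf.mp hy
  exact (φ a).2

theorem trf_mono (φ : ↥N1 ≃* ↥N2) {X Y : Subgroup G} (h : X ≤ Y) : trf φ X ≤ trf φ Y := by
  rintro y hy
  obtain ⟨a, ha, rfl⟩ := mem_trf.mp hy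
  exact mem_trf.mpr ⟨a, h ha, rfl⟩

theorem trf_self (φ : ↥N1 ≃* ↥N2) : trf φ N1 = N2 := by
  apply le_antisymm (trf_le_right φ N1)
  intro y hy
  exact mem_trf.mpr ⟨φ.symm ⟨y, hy⟩, (φ.symm ⟨y, hy⟩).2, by simp⟩

theorem trf_trf_symm (φ : ↥N1 ≃* ↥N2) {X : Subgroup G} (hX : X ≤ N2) :
    trf φ (trf φ.symm X) = X := by
  ext y
  constructor
  · intro hy
    obtain ⟨a, ha, rfl⟩ := mem_trf.mp hy
    obtain ⟨b, hb, hba⟩ := mem_trf.mp ha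
    have : a = φ.symm b := Subtype.ext hba.symm
    rw [this]; simpa using hb
  · intro hy
    refine mem_trf.mpr ⟨φ.symm ⟨y, hX hy⟩, mem_trf.mpr ⟨⟨y, hX hy⟩, hy, rfl⟩, by simp⟩

theorem trf_nonempty_iso (φ : ↥N1 ≃* ↥N2) {X : Subgroup G} (hX : X ≤ N1) :
    Nonempty (↥X ≃* ↥(trf φ X)) := by
  refine ⟨((Subgroup.subgroupOfEquivOfLe hX).symm.trans
    (Subgroup.equivMapOfInjective (X.subgroupOf N1) (N2.subtype.comp φ.toMonoidHom) ?_))⟩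
  exact (Subgroup.subtype_injective N2).comp φ.injective

theorem trf_card (φ : ↥N1 ≃* ↥N2) {X : Subgroup G} (hX : X ≤ N1) :
    Nat.card ↥(trf φ X) = Nat.card ↥X :=
  (Nat.card_congr (trf_nonempty_iso φ hX).some.toEquiv).symm

theorem trf_eq_bot_iff (φ : ↥N1 ≃* ↥N2) {X : Subgroup G} (hX : X ≤ N1) :
    trf φ X = ⊥ ↔ X = ⊥ := by
  constructor
  · intro h
    rw [eq_bot_iff]
    intro x hx
    have : ((φ ⟨x, hX hx⟩ : ↥N2) : G) ∈ trf φ X := mem_trf.mpr ⟨⟨x, hX hx⟩, hx, rfl⟩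
    rw [h, Subgroup.mem_bot] at this
    have h1 : φ ⟨x, hX hx⟩ = 1 := Subtype.ext this
    have h2 : (⟨x, hX hx⟩ : ↥N1) = 1 := φ.injective (by simpa using h1)
    simpa [Subgroup.mem_bot] using congrArg Subtype.val h2
  · rintro rfl
    simp [trf]

theorem trf_normalIn (φ : ↥N1 ≃* ↥N2) {X Y : Subgroup G} (hY : Y ≤ N1)
    (h : NormalIn X Y) : NormalIn (trf φ X) (trf φ Y) := by
  constructor
  · exact trf_mono φ h.1
  · rintro b hb a ha
    obtain ⟨b', hb', rfl⟩ := mem_trf.mp hb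
    obtain ⟨a', ha', rfl⟩ := mem_trf.mp ha
    refine mem_trf.mpr ⟨b' * a' * b'⁻¹, h.2 b' hb' a' ha', ?_⟩
    push_cast [map_mul, map_inv]
    rfl

theorem trf_subnormal (φ : ↥N1 ≃* ↥N2) {X Y : Subgroup G}
    (h : Subnormal X Y) : Y ≤ N1 → Subnormal (trf φ X) (trf φ Y) := by
  induction h with
  | refl => exact fun _ => Subnormal.refl _
  | step hAB hBC ih =>
    exact fun hY => (ih (hBC.1.trans hY)).step (trf_normalIn φ hY hBC)

theorem trf_radIn [Finite G] (φ : ↥N1 ≃* ↥N2) : trf φ (radIn N1) = radIn N2 := by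
  have key : ∀ (A B : Subgroup G) (ψ : ↥A ≃* ↥B), trf ψ (radIn A) ≤ radIn B := by
    intro A B ψ
    apply le_radIn
    constructor
    · have := trf_normalIn ψ (le_refl A) (radIn_mem A).1
      rwa [trf_self] at this
    · exact isSolvable_of_mulEquiv (trf_nonempty_iso ψ (radIn_le A)).some (radIn_mem A).2
  apply le_antisymm (key _ _ φ)
  calc radIn N2 = trf φ (trf φ.symm (radIn N2)) := (trf_trf_symm φ (radIn_le N2)).symm
    _ ≤ trf φ (radIn N1) := trf_mono φ (key _ _ φ.symm)

theorem trf_sSup_eq (φ : ↥N1 ≃* ↥N2) {S1 S2 : Set (Subgroup G)}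
    (h1 : ∀ X ∈ S1, X ≤ N1) (h2 : ∀ Y ∈ S2, Y ≤ N2)
    (f12 : ∀ X ∈ S1, trf φ X ∈ S2) (f21 : ∀ Y ∈ S2, trf φ.symm Y ∈ S1) :
    trf φ (sSup S1) = sSup S2 := by
  have hS1 : sSup S1 ≤ N1 := sSup_le h1
  have hS2 : sSup S2 ≤ N2 := sSup_le h2
  apply le_antisymm
  · have step : sSup S1 ≤ trf φ.symm (sSup S2) := by
      apply sSup_le
      intro X hX
      calc X = trf φ.symm (trf φ X) := by
                rw [show trf φ X = trf φ.symm.symm X by rfl, trf_trf_symm φ.symm (h1 X hX)]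
        _ ≤ trf φ.symm (sSup S2) := trf_mono _ (le_sSup (f12 X hX))
    calc trf φ (sSup S1) ≤ trf φ (trf φ.symm (sSup S2)) := trf_mono φ step
      _ = sSup S2 := trf_trf_symm φ hS2
  · apply sSup_le
    intro Y hY
    calc Y = trf φ (trf φ.symm Y) := (trf_trf_symm φ (h2 Y hY)).symm
      _ ≤ trf φ (sSup S1) := trf_mono φ (le_sSup (f21 Y hY))

end Transfer

section ConjTransfer

variable {G G' : Type} [Group G] [Group G']

theorem normalIn_map (e : G ≃* G') {X Y : Subgroup G} (h : NormalIn X Y) :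
    NormalIn (X.map e.toMonoidHom) (Y.map e.toMonoidHom) := by
  constructor
  · exact Subgroup.map_mono h.1
  · rintro b hb a ha
    obtain ⟨b', hb', rfl⟩ := Subgroup.mem_map.mp hb
    obtain ⟨a', ha', rfl⟩ := Subgroup.mem_map.mp ha
    exact Subgroup.mem_map.mpr ⟨b' * a' * b'⁻¹, h.2 b' hb' a' ha', by simp⟩

theorem subnormal_map (e : G ≃* G') {X Y : Subgroup G} (h : Subnormal X Y) :
    Subnormal (X.map e.toMonoidHom) (Y.map e.toMonoidHom) := by
  induction h with
  | refl => exact Subnormal.refl _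
  | step _ hBC ih => exact ih.step (normalIn_map e hBC)

theorem map_sSup_equiv (e : G ≃* G') (S : Set (Subgroup G)) :
    Subgroup.map e.toMonoidHom (sSup S) = sSup (Subgroup.map e.toMonoidHom '' S) := by
  apply le_antisymm
  · rw [Subgroup.map_le_iff_le_comap]
    apply sSup_le
    intro X hX
    rw [← Subgroup.map_le_iff_le_comap]
    exact le_sSup ⟨X, hX, rfl⟩
  · apply sSup_le
    rintro _ ⟨X, hX, rfl⟩
    exact Subgroup.map_mono (le_sSup hX)

theorem normal_of_conj_map (A : Subgroup G)
    (h : ∀ g : G, A.map (MulAut.conj g).toMonoidHom = A) : A.Normal := by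
  constructor
  intro a ha g
  have key : (g * a * g⁻¹) ∈ A.map (MulAut.conj g).toMonoidHom :=
    Subgroup.mem_map.mpr ⟨a, ha, by simp [MulAut.conj_apply]⟩
  rwa [h g] at key

end ConjTransfer

section Components

variable {G : Type} [Group G]

theorem card_lt_of_lt [Finite G] {H K : Subgroup G} (h : H < K) :
    Nat.card ↥H < Nat.card ↥K := by
  have h1 : (H : Set G) ⊂ (K : Set G) := SetLike.coe_ssubset_coe.mpr h
  have := Set.ncard_lt_ncard h1 (Set.toFinite _)
  simpa [← Nat.card_coe_set_eq] using this

/-- A nonabelian simple subgroup. -/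
def SimpleNA (Q : Subgroup G) : Prop :=
  IsSimpleGroup ↥Q ∧ ∃ x y : ↥Q, x * y ≠ y * x

theorem SimpleNA.ne_bot {Q : Subgroup G} (h : SimpleNA Q) : Q ≠ ⊥ := by
  haveI := h.1
  exact (Subgroup.nontrivial_iff_ne_bot Q).mp IsSimpleGroup.toNontrivial

theorem normalIn_map_subtype {M : Subgroup G} (X : Subgroup ↥M) (hX : X.Normal) :
    NormalIn (Subgroup.map M.subtype X) M := by
  refine ⟨Subgroup.map_subtype_le X, fun b hb a ha => ?_⟩
  obtain ⟨a', ha', rfl⟩ := Subgroup.mem_map.mp ha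
  exact Subgroup.mem_map.mpr ⟨⟨b, hb⟩ * a' * ⟨b, hb⟩⁻¹, hX.conj_mem a' ha' ⟨b, hb⟩, rfl⟩

theorem SimpleNA.dichotomy {Q K : Subgroup G} (h : SimpleNA Q) (hK : NormalIn K Q) :
    K = ⊥ ∨ K = Q := by
  haveI := h.1
  haveI := (normalIn_iff_subgroupOf_normal hK.1).mp hK
  rcases Subgroup.Normal.eq_bot_or_eq_top (inferInstance : (K.subgroupOf Q).Normal) with h1 | h1
  · left
    have := congrArg (Subgroup.map Q.subtype) h1
    rwa [Subgroup.subgroupOf_map_subtype, inf_eq_left.mpr hK.1, Subgroup.map_bot] at this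
  · right
    have := congrArg (Subgroup.map Q.subtype) h1
    rwa [Subgroup.subgroupOf_map_subtype, inf_eq_left.mpr hK.1,
      ← MonoidHom.range_eq_map, Subgroup.range_subtype] at this

theorem SimpleNA.of_iso {Q Q' : Subgroup G} (e : ↥Q ≃* ↥Q') (h : SimpleNA Q) : SimpleNA Q' := by
  obtain ⟨hs, x, y, hxy⟩ := h
  haveI := hs
  haveI : Nontrivial ↥Q' := ⟨e x, e y, fun hc => hxy (e.injective (by simp_all))⟩
  refine ⟨⟨?_⟩, e x, e y, fun hc => hxy (e.injective (by simpa using hc))⟩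
  intro H hH
  have hH' : (Subgroup.map e.symm.toMonoidHom H).Normal := hH.map _ e.symm.surjective
  rcases Subgroup.Normal.eq_bot_or_eq_top hH' with h1 | h1
  · left
    have := congrArg (Subgroup.map e.toMonoidHom) h1
    rwa [map_map_symm, Subgroup.map_bot] at this
  · right
    have := congrArg (Subgroup.map e.toMonoidHom) h1
    rwa [map_map_symm, Subgroup.map_top_of_surjective _ e.surjective] at this

theorem SimpleNA.perfect {Q : Subgroup G} (h : SimpleNA Q) : ⁅Q, Q⁆ = Q := by
  have hle : ⁅Q, Q⁆ ≤ Q := Subgroup.commutator_le.mpr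
    (fun g1 h1 g2 h2 => Q.mul_mem (Q.mul_mem (Q.mul_mem h1 h2) (Q.inv_mem h1)) (Q.inv_mem h2))
  have hni : NormalIn ⁅Q, Q⁆ Q := by
    refine normalIn_of_map_conj hle (fun b hb => ?_)
    rw [Subgroup.map_commutator, (normalIn_refl Q).map_conj_eq hb]
  rcases h.dichotomy hni with h1 | h1
  · exfalso
    obtain ⟨_, x, y, hxy⟩ := h
    have hmem : (open scoped commutatorElement in ⁅(x : G), (y : G)⁆ ∈ (⊥ : Subgroup G)) :=
      Subgroup.commutator_le.mp (le_of_eq h1) (x : G) x.2 (y : G) y.2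
    rw [Subgroup.mem_bot, commutatorElement_eq_one_iff_commute] at hmem
    exact hxy (Subtype.ext (by push_cast; exact hmem))
  · exact h1

/-- Components intersect trivially with, or centralize, relatively normal subgroups. -/
theorem comp_vs_normal {Q T : Subgroup G} (hQ : Subnormal Q T) (hs : SimpleNA Q) :
    ∀ N : Subgroup G, NormalIn N T → Q ≤ N ∨ ⁅Q, N⁆ = ⊥ := by
  induction hQ with
  | refl =>
    intro N hN
    rcases hs.dichotomy hN with h1 | h1
    · right; rw [h1, Subgroup.commutator_bot_right]
    · left; rw [h1]
  | @step B C hAB hBC ih =>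
    intro N hN
    have hN' : NormalIn (N ⊓ B) B := by
      have := hN.inf_right B
      rwa [inf_eq_right.mpr hBC.1] at this
    rcases ih (N ⊓ B) hN' with h1 | h1
    · exact Or.inl (h1.trans inf_le_left)
    · right
      have hQN : ⁅Q, N⁆ ≤ N ⊓ B := by
        rw [Subgroup.commutator_le]
        intro q hq n hn
        have hqB : q ∈ B := hAB.le hq
        rw [commutatorElement_def]
        constructor
        · have h2 : q * n * q⁻¹ ∈ N := hN.2 q (hBC.1 hqB) n hn
          simpa [mul_assoc] using N.mul_mem h2 (N.inv_mem hn)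
        · have h3 : n * q⁻¹ * n⁻¹ ∈ B := hBC.2 n (hN.1 hn) q⁻¹ (B.inv_mem hqB)
          have := B.mul_mem hqB h3
          simpa [mul_assoc] using this
      have r1 : ⁅⁅Q, N⁆, Q⁆ = ⊥ := le_bot_iff.mp (le_of_le_of_eq
        (Subgroup.commutator_mono hQN le_rfl)
        (by rw [Subgroup.commutator_comm]; exact h1))
      have r2 : ⁅⁅N, Q⁆, Q⁆ = ⊥ := by rwa [Subgroup.commutator_comm N Q]
      have r3 : ⁅⁅Q, Q⁆, N⁆ = ⊥ := Subgroup.commutator_commutator_eq_bot_of_rotate r1 r2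
      rwa [hs.perfect] at r3

theorem subnormal_of_le {Q T H : Subgroup G} (hQ : Subnormal Q T) (hle : Q ≤ H)
    (hH : NormalIn H T) : Subnormal Q H := by
  have := hQ.inf_right H
  rw [inf_eq_left.mpr hle, inf_eq_right.mpr hH.1] at this
  exact this

theorem subnormal_in_simple {A B : Subgroup G} (h : Subnormal A B) :
    SimpleNA B → A = ⊥ ∨ A = B := by
  induction h with
  | refl => exact fun _ => Or.inr rfl
  | @step C B hAC hCB ih =>
    intro hs
    rcases hs.dichotomy hCB with h1 | h1
    · left; exact le_bot_iff.mp (le_trans hAC.le (le_of_eq h1))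
    · exact h1 ▸ ih (h1 ▸ hs)

/-- Distinct components commute. -/
theorem comp_commute {Q T : Subgroup G} (hQ : Subnormal Q T) (hs : SimpleNA Q) :
    ∀ Q' : Subgroup G, Subnormal Q' T → SimpleNA Q' → Q ≠ Q' → ⁅Q, Q'⁆ = ⊥ := by
  induction hQ with
  | refl =>
    intro Q' hQ' hs' hne
    rcases subnormal_in_simple hQ' hs with h1 | h1
    · rw [h1, Subgroup.commutator_bot_right]
    · exact absurd h1.symm hne
  | @step B C hAB hBC ih =>
    intro Q' hQ' hs' hne
    rcases comp_vs_normal hQ' hs' B hBC with h1 | h1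
    · exact ih Q' (subnormal_of_le hQ' h1 hBC) hs' hne
    · rw [Subgroup.commutator_comm]
      exact le_bot_iff.mp (le_of_le_of_eq (Subgroup.commutator_mono le_rfl hAB.le) h1)

theorem radIn_map [Finite G] {G' : Type} [Group G'] [Finite G'] (e : G ≃* G') (M : Subgroup G) :
    Subgroup.map e.toMonoidHom (radIn M) = radIn (Subgroup.map e.toMonoidHom M) := by
  have key : ∀ (H H' : Type) (_ : Group H) (_ : Group H'), ∀ [Finite H] [Finite H'],
      ∀ (f : H ≃* H') (X : Subgroup H),
      Subgroup.map f.toMonoidHom (radIn X) ≤ radIn (Subgroup.map f.toMonoidHom X) := by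
    intro H H' _ _ _ _ f X
    apply le_radIn
    exact ⟨normalIn_map f (radIn_mem X).1,
      isSolvable_of_mulEquiv (Subgroup.equivMapOfInjective _ _ f.injective) (radIn_mem X).2⟩
  apply le_antisymm (key G G' _ _ e M)
  have h2 := key G' G _ _ e.symm (Subgroup.map e.toMonoidHom M)
  rw [show Subgroup.map e.toMonoidHom M = Subgroup.map e.symm.symm.toMonoidHom M from rfl,
    map_map_symm e.symm] at h2
  calc radIn (Subgroup.map e.toMonoidHom M)
      = Subgroup.map e.toMonoidHom (Subgroup.map e.symm.toMonoidHom
          (radIn (Subgroup.map e.toMonoidHom M))) := (map_map_symm e _).symm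
    _ ≤ Subgroup.map e.toMonoidHom (radIn M) := Subgroup.map_mono h2

/-- Existence of a component in a nontrivial subgroup with trivial (relative) radical. -/
theorem exists_comp [Finite G] : ∀ (n : ℕ) (T : Subgroup G), Nat.card ↥T ≤ n → T ≠ ⊥ →
    (∀ A, NormalIn A T → IsSolvable ↥A → A = ⊥) → ∃ Q, Subnormal Q T ∧ SimpleNA Q := by
  intro n
  induction n with
  | zero =>
    intro T hcard _ _
    have : 0 < Nat.card ↥T := Nat.card_pos
    omega
  | succ n ih =>
    intro T hcard hT hr
    obtain ⟨M, ⟨hMne, hMN⟩, hmin⟩ := Set.Finite.exists_minimalFor id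
      {A : Subgroup G | A ≠ ⊥ ∧ NormalIn A T} (Set.toFinite _) ⟨T, hT, normalIn_refl T⟩
    simp only [id] at hmin
    -- relative radical condition passes to M
    have hrM : ∀ B, NormalIn B M → IsSolvable ↥B → B = ⊥ := by
      intro B hB hBs
      have h1 : B ≤ radIn M := le_radIn ⟨hB, hBs⟩
      have h2 : radIn M = ⊥ := by
        apply hr
        · refine normalIn_of_map_conj ((radIn_le M).trans hMN.1) (fun b hb => ?_)
          rw [radIn_map (MulAut.conj b) M, hMN.map_conj_eq hb]
        · exact (radIn_mem M).2
      exact le_bot_iff.mp (h2 ▸ h1)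
    by_cases hMT : M = T
    · subst hMT
      -- M is minimal normal in itself: it is simple
      have hdich : ∀ K, NormalIn K M → K = ⊥ ∨ K = M := by
        intro K hK
        by_cases hKbot : K = ⊥
        · exact Or.inl hKbot
        · exact Or.inr (le_antisymm hK.1 (hmin ⟨hKbot, hK⟩ hK.1))
      -- nonabelian
      have hna : ∃ x y : ↥M, x * y ≠ y * x := by
        by_contra hcon
        push_neg at hcon
        have : IsSolvable ↥M := isSolvable_of_comm (fun a b => hcon a b)
        exact hMne (hr M (normalIn_refl M) this)
      haveI : Nontrivial ↥M := (Subgroup.nontrivial_iff_ne_bot M).mpr hMne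
      refine ⟨M, Subnormal.refl M, ⟨?_⟩, hna⟩
      intro H hH
      rcases hdich (Subgroup.map M.subtype H) (normalIn_map_subtype H hH) with h1 | h1
      · left
        rw [Subgroup.map_eq_bot_iff, Subgroup.ker_subtype, le_bot_iff] at h1
        exact h1
      · right
        apply Subgroup.map_injective (Subgroup.subtype_injective M)
        rw [h1]
        apply le_antisymm
        · intro x hx
          exact Subgroup.mem_map.mpr ⟨⟨x, hx⟩, trivial, rfl⟩
        · exact Subgroup.map_subtype_le _
    · have hlt : M < T := lt_of_le_of_ne hMN.1 hMT
      have hcard' : Nat.card ↥M ≤ n := by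
        have := card_lt_of_lt hlt
        omega
      obtain ⟨Q, hQ1, hQ2⟩ := ih M hcard' hMne hrM
      exact ⟨Q, hQ1.step hMN, hQ2⟩

end Components

section Matching

variable {G : Type} [Group G]

/-- Isomorphism relation on subgroups. -/
def isoRel (A B : Subgroup G) : Prop := Nonempty (↥A ≃* ↥B)

def isoSetoid (G : Type) [Group G] : Setoid (Subgroup G) :=
  ⟨isoRel, ⟨fun A => ⟨MulEquiv.refl _⟩, fun ⟨e⟩ => ⟨e.symm⟩, fun ⟨e⟩ ⟨f⟩ => ⟨e.trans f⟩⟩⟩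

noncomputable def isoCl (A : Subgroup G) : Quotient (isoSetoid G) := Quotient.mk _ A

theorem isoCl_eq {A B : Subgroup G} (h : isoRel A B) : isoCl A = isoCl B := Quotient.sound h

theorem isoRel_of_isoCl_eq {A B : Subgroup G} (h : isoCl A = isoCl B) : isoRel A B :=
  Quotient.exact h

/-- From equality of class multisets, extract a matching. -/
theorem rel_of_map_isoCl_eq : ∀ (s t : Multiset (Subgroup G)),
    s.map isoCl = t.map isoCl → Multiset.Rel isoRel s t := by
  classical
  intro s
  induction s using Multiset.induction with
  | empty =>
    intro t h
    simp only [Multiset.map_zero] at h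
    rw [eq_comm, Multiset.map_eq_zero] at h
    rw [h]
    exact Multiset.Rel.zero
  | cons a s' ih =>
    intro t h
    rw [Multiset.map_cons] at h
    have hmem : isoCl a ∈ t.map isoCl := by rw [← h]; exact Multiset.mem_cons_self _ _
    obtain ⟨b, hb, hba⟩ := Multiset.mem_map.mp hmem
    have hrel : isoRel a b := isoRel_of_isoCl_eq hba.symm
    have ht : t = b ::ₘ t.erase b := (Multiset.cons_erase hb).symm
    rw [ht, Multiset.map_cons, ← hba] at h
    have h' : s'.map isoCl = (t.erase b).map isoCl := by
      exact (Multiset.cons_inj_right _).mp h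
    rw [ht]
    exact Multiset.Rel.cons hrel (ih _ h')

open Classical in
/-- A bijection preserving iso-classes gives equality of class multisets. -/
theorem map_isoCl_eq_of_bij (s t : Finset (Subgroup G)) (f g : Subgroup G → Subgroup G)
    (hf : ∀ a ∈ s, f a ∈ t) (hg : ∀ b ∈ t, g b ∈ s)
    (hgf : ∀ a ∈ s, g (f a) = a) (hfg : ∀ b ∈ t, f (g b) = b)
    (hq : ∀ a ∈ s, isoCl (f a) = isoCl a) :
    s.val.map isoCl = t.val.map isoCl := by
  apply Multiset.ext.mpr
  intro c
  rw [Multiset.count_map, Multiset.count_map]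
  have : (Multiset.filter (fun a => c = isoCl a) s.val).card =
      (Multiset.filter (fun b => c = isoCl b) t.val).card := by
    have h1 : Multiset.filter (fun a => c = isoCl a) s.val =
        (s.filter (fun a => c = isoCl a)).val := by simp [Finset.filter]
    have h2 : Multiset.filter (fun b => c = isoCl b) t.val =
        (t.filter (fun b => c = isoCl b)).val := by simp [Finset.filter]
    rw [h1, h2]
    show (s.filter (fun a => c = isoCl a)).card = (t.filter (fun b => c = isoCl b)).card
    apply Finset.card_bij (fun a _ => f a)
    · intro a ha
      simp only [Finset.mem_filter] at ha ⊢
      exact ⟨hf a ha.1, by rw [hq a ha.1]; exact ha.2⟩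
    · intro a ha a' ha' hfa
      simp only [Finset.mem_filter] at ha ha'
      rw [← hgf a ha.1, ← hgf a' ha'.1, hfa]
    · intro b hb
      simp only [Finset.mem_filter] at hb
      refine ⟨g b, Finset.mem_filter.mpr ⟨hg b hb.1, ?_⟩, hfg b hb.1⟩
      have := hq (g b) (hg b hb.1)
      rw [hfg b hb.1] at this
      rw [← this]; exact hb.2
  exact this

end Matching

section Products

variable {G : Type} [Group G]

theorem centralizer_inf_eq_bot {Q : Subgroup G} (h : SimpleNA Q) :
    Q ⊓ Subgroup.centralizer (Q : Set G) = ⊥ := by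
  have hni : NormalIn (Q ⊓ Subgroup.centralizer (Q : Set G)) Q := by
    refine ⟨inf_le_left, fun b hb a ⟨ha1, ha2⟩ => ?_⟩
    have hcomm : b * a = a * b := Subgroup.mem_centralizer_iff.mp ha2 b hb
    have : b * a * b⁻¹ = a := by rw [hcomm]; group
    rw [this]
    exact ⟨ha1, ha2⟩
  rcases h.dichotomy hni with h1 | h1
  · exact h1
  · exfalso
    obtain ⟨_, x, y, hxy⟩ := h
    have hQC : Q ≤ Subgroup.centralizer (Q : Set G) := h1.symm.le.trans inf_le_right
    have := Subgroup.mem_centralizer_iff.mp (hQC y.2) (x : G) x.2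
    exact hxy (Subtype.ext (by push_cast; exact this))

theorem noncommCoprod_sup {H K : Subgroup G}
    (hcomm : ∀ h ∈ H, ∀ k ∈ K, Commute h k) (hdisj : H ⊓ K = ⊥) :
    Nonempty (↥(H ⊔ K) ≃* ↥H × ↥K) := by
  have hc : ∀ (m : ↥H) (n : ↥K), Commute (H.subtype m) (K.subtype n) :=
    fun m n => hcomm m m.2 n n.2
  set f := MonoidHom.noncommCoprod H.subtype K.subtype hc with hf
  have hfapp : ∀ p : ↥H × ↥K, f p = (p.1 : G) * (p.2 : G) := fun p => rfl
  have hinj : Function.Injective f := by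
    intro a b hab
    rw [hfapp, hfapp] at hab
    have e : (b.1 : G)⁻¹ * a.1 = (b.2 : G) * (a.2 : G)⁻¹ := by
      have h0 : ((a.1 : G) * a.2) * (a.2 : G)⁻¹ = ((b.1 : G) * b.2) * (a.2 : G)⁻¹ := by
        rw [hab]
      have h1 : (a.1 : G) = (b.1 : G) * (b.2 : G) * (a.2 : G)⁻¹ := by
        simpa [mul_assoc] using h0
      rw [h1]
      group
    have hH' : (b.1 : G)⁻¹ * a.1 ∈ H := H.mul_mem (H.inv_mem b.1.2) a.1.2
    have hK' : (b.1 : G)⁻¹ * a.1 ∈ K := e ▸ K.mul_mem b.2.2 (K.inv_mem a.2.2)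
    have hbot : (b.1 : G)⁻¹ * a.1 ∈ (⊥ : Subgroup G) := hdisj ▸ Subgroup.mem_inf.mpr ⟨hH', hK'⟩
    rw [Subgroup.mem_bot, inv_mul_eq_one] at hbot
    have h2 : (a.2 : G) = b.2 := by
      have := hab
      rw [← hbot] at this
      exact mul_left_cancel this
    exact Prod.ext (Subtype.ext hbot.symm) (Subtype.ext h2)
  have hrange : f.range = H ⊔ K := by
    apply le_antisymm
    · rintro x ⟨p, rfl⟩
      rw [hfapp]
      exact Subgroup.mul_mem _ (Subgroup.mem_sup_left p.1.2) (Subgroup.mem_sup_right p.2.2)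
    · rw [sup_le_iff]
      constructor
      · intro h hh; exact ⟨(⟨h, hh⟩, 1), by simp [hfapp]⟩
      · intro k hk; exact ⟨(1, ⟨k, hk⟩), by simp [hfapp]⟩
  have e1 : (↥H × ↥K) ≃* f.range := MonoidHom.ofInjective hinj
  exact ⟨(MulEquiv.subgroupCongr hrange.symm).trans e1.symm⟩

theorem sup_iso_of_rel : ∀ (s t : Multiset (Subgroup G)), Multiset.Rel isoRel s t →
    s.Nodup → t.Nodup →
    (∀ a ∈ s, SimpleNA a) → (∀ b ∈ t, SimpleNA b) →
    (∀ a ∈ s, ∀ b ∈ s, a ≠ b → ⁅a, b⁆ = ⊥) → (∀ a ∈ t, ∀ b ∈ t, a ≠ b → ⁅a, b⁆ = ⊥) →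
    Nonempty (↥(s.sup) ≃* ↥(t.sup)) := by
  intro s t hrel
  induction hrel with
  | zero => intro _ _ _ _ _ _; exact ⟨MulEquiv.refl _⟩
  | @cons a b s' t' hab hrel ih =>
    intro hns hnt hsim hsim' hcom hcom'
    rw [Multiset.nodup_cons] at hns hnt
    have key : ∀ (c : Subgroup G) (u : Multiset (Subgroup G)), SimpleNA c → c ∉ u →
        (∀ x ∈ u, ∀ y ∈ (c ::ₘ u), x ≠ y → ⁅x, y⁆ = ⊥) →
        (∀ h ∈ c, ∀ k ∈ u.sup, Commute h k) ∧ c ⊓ u.sup = ⊥ := by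
      intro c u hc hcu hcomm
      have hle : u.sup ≤ Subgroup.centralizer (c : Set G) := by
        apply Multiset.sup_le.mpr
        intro x hx
        rw [← Subgroup.commutator_eq_bot_iff_le_centralizer]
        exact hcomm x hx c (Multiset.mem_cons_self _ _) (fun he => hcu (he ▸ hx))
      constructor
      · intro h hh k hk
        have := Subgroup.mem_centralizer_iff.mp (hle hk) h hh
        exact this
      · have : c ⊓ u.sup ≤ c ⊓ Subgroup.centralizer (c : Set G) := inf_le_inf_left c hle
        rw [centralizer_inf_eq_bot hc] at this
        exact le_bot_iff.mp this
    have ⟨hcomm1, hdisj1⟩ := key a s' (hsim a (Multiset.mem_cons_self _ _)) hns.1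
      (fun x hx y hy hxy => hcom x (Multiset.mem_cons_of_mem hx) y hy hxy)
    have ⟨hcomm2, hdisj2⟩ := key b t' (hsim' b (Multiset.mem_cons_self _ _)) hnt.1
      (fun x hx y hy hxy => hcom' x (Multiset.mem_cons_of_mem hx) y hy hxy)
    obtain ⟨e1⟩ := noncommCoprod_sup hcomm1 hdisj1
    obtain ⟨e2⟩ := noncommCoprod_sup hcomm2 hdisj2
    obtain ⟨em⟩ := ih hns.2 hnt.2
      (fun x hx => hsim x (Multiset.mem_cons_of_mem hx))
      (fun x hx => hsim' x (Multiset.mem_cons_of_mem hx))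
      (fun x hx y hy hxy => hcom x (Multiset.mem_cons_of_mem hx) y (Multiset.mem_cons_of_mem hy) hxy)
      (fun x hx y hy hxy => hcom' x (Multiset.mem_cons_of_mem hx) y (Multiset.mem_cons_of_mem hy) hxy)
    obtain ⟨eab⟩ := hab
    rw [Multiset.sup_cons, Multiset.sup_cons]
    exact ⟨e1.trans ((MulEquiv.prodCongr eab em).trans e2.symm)⟩

end Products

section QuotHelpers

variable {G : Type} [Group G]

theorem top_ne_bot_of_nontrivial {H : Type} [Group H] [Nontrivial H] :
    (⊤ : Subgroup H) ≠ ⊥ := by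
  intro h
  obtain ⟨x, y, hxy⟩ := exists_pair_ne H
  have hx : x ∈ (⊥ : Subgroup H) := h ▸ Subgroup.mem_top x
  have hy : y ∈ (⊥ : Subgroup H) := h ▸ Subgroup.mem_top y
  rw [Subgroup.mem_bot] at hx hy
  exact hxy (hx.trans hy.symm)

def mulEquivOfSubsingleton {A B : Type} [Group A] [Group B] [Subsingleton A] [Subsingleton B] :
    A ≃* B where
  toFun := fun _ => 1
  invFun := fun _ => 1
  left_inv := fun a => Subsingleton.elim _ _
  right_inv := fun b => Subsingleton.elim _ _
  map_mul' := fun _ _ => (one_mul 1).symm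

theorem compatible_of_iso (X Y : Type) [Group X] [Group Y] [Finite X]
    (h : Nonempty (X ≃* Y)) : Compatible X Y := by
  obtain ⟨e⟩ := h
  refine ⟨X, inferInstance, inferInstance, ⊥, ⊥, inferInstance, inferInstance,
    ⟨MulEquiv.refl _⟩, ⟨QuotientGroup.quotientBot⟩, ⟨QuotientGroup.quotientBot.trans e⟩⟩

/-- `S / N ≅` image of `H` in `G/N`, whenever `N ≤ S ≤ N ⊔ H` and `H ≤ S`. -/
noncomputable def helperQ (N H S : Subgroup G) [N.Normal] (hNS : N ≤ S) (hHS : H ≤ S)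
    (hS : S ≤ N ⊔ H) : (↥S ⧸ N.subgroupOf S) ≃* ↥(Subgroup.map (QuotientGroup.mk' N) H) := by
  set θ : ↥S →* G ⧸ N := (QuotientGroup.mk' N).comp S.subtype with hθ
  have hker : θ.ker = N.subgroupOf S := by
    ext x
    simp only [MonoidHom.mem_ker, hθ, MonoidHom.comp_apply, Subgroup.mem_subgroupOf]
    rw [show (QuotientGroup.mk' N) (S.subtype x) = ((x : G) : G ⧸ N) from rfl]
    exact QuotientGroup.eq_one_iff _
  have hrange : θ.range = Subgroup.map (QuotientGroup.mk' N) H := by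
    rw [hθ, MonoidHom.range_comp, Subgroup.range_subtype]
    apply le_antisymm
    · have h1 : Subgroup.map (QuotientGroup.mk' N) S ≤
          Subgroup.map (QuotientGroup.mk' N) (N ⊔ H) := Subgroup.map_mono hS
      have hbot : Subgroup.map (QuotientGroup.mk' N) N = ⊥ := by
        rw [Subgroup.map_eq_bot_iff, QuotientGroup.ker_mk']
      rwa [Subgroup.map_sup, hbot, bot_sup_eq] at h1
    · exact Subgroup.map_mono hHS
  exact (QuotientGroup.quotientMulEquivOfEq hker.symm).trans
    ((QuotientGroup.quotientKerEquivRange θ).trans (MulEquiv.subgroupCongr hrange))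

/-- An injective-on-`A` map gives an isomorphism onto the image. -/
noncomputable def mapIsoOfDisjointKer {G' : Type} [Group G'] (f : G →* G') (A : Subgroup G)
    (h : A ⊓ f.ker = ⊥) : ↥A ≃* ↥(Subgroup.map f A) := by
  apply MulEquiv.ofBijective (f.subgroupMap A)
  constructor
  · intro a b hab
    have h1 : f (a : G) = f (b : G) := congrArg Subtype.val hab
    have h2 : (a : G) * (b : G)⁻¹ ∈ f.ker := by
      rw [MonoidHom.mem_ker, map_mul, map_inv, h1, mul_inv_cancel]
    have h3 : (a : G) * (b : G)⁻¹ ∈ A := A.mul_mem a.2 (A.inv_mem b.2)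
    have h4 : (a : G) * (b : G)⁻¹ ∈ (⊥ : Subgroup G) := h ▸ Subgroup.mem_inf.mpr ⟨h3, h2⟩
    rw [Subgroup.mem_bot, mul_inv_eq_one] at h4
    exact Subtype.ext h4
  · exact MonoidHom.subgroupMap_surjective f A

theorem isSolvable_map {G' : Type} [Group G'] (f : G →* G') (A : Subgroup G)
    (h : IsSolvable ↥A) : IsSolvable ↥(Subgroup.map f A) := by
  haveI : Group.IsSolvable ↥A := h
  exact solvable_of_surjective (MonoidHom.subgroupMap_surjective f A)

theorem normalIn_map_hom {G' : Type} [Group G'] (f : G →* G') {A B : Subgroup G}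
    (h : NormalIn A B) : NormalIn (Subgroup.map f A) (Subgroup.map f B) := by
  constructor
  · exact Subgroup.map_mono h.1
  · rintro b hb a ha
    obtain ⟨b', hb', rfl⟩ := Subgroup.mem_map.mp hb
    obtain ⟨a', ha', rfl⟩ := Subgroup.mem_map.mp ha
    exact Subgroup.mem_map.mpr ⟨b' * a' * b'⁻¹, h.2 b' hb' a' ha', by simp⟩

theorem normal_map_conj {N : Subgroup G} (hN : N.Normal) (g : G) :
    N.map (MulAut.conj g).toMonoidHom = N := by
  apply le_antisymm
  · rintro x hx
    obtain ⟨a, ha, rfl⟩ := Subgroup.mem_map.mp hx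
    simpa [MulAut.conj_apply] using hN.conj_mem a ha g
  · intro a ha
    exact Subgroup.mem_map.mpr ⟨g⁻¹ * a * g, by simpa using hN.conj_mem a ha g⁻¹,
      by simp [MulAut.conj_apply]; group⟩

theorem eq_of_le_of_card_le [Finite G] {H K : Subgroup G} (hle : H ≤ K)
    (hcard : Nat.card ↥K ≤ Nat.card ↥H) : H = K := by
  by_contra hne
  exact absurd hcard (not_le.mpr (card_lt_of_lt (lt_of_le_of_ne hle hne)))

/-- transported radical consequence: if the image of `A` in `L ≅ G/N` has trivial
solvable radical, then `radIn A ≤ N`. -/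
theorem radical_transfer [Finite G] {N A : Subgroup G} [hN : N.Normal] [hA : A.Normal]
    {L : Type} [Group L] [Finite L] (e : (G ⧸ N) ≃* L)
    (h : solvableRadical ↥(Subgroup.map e.toMonoidHom
      (Subgroup.map (QuotientGroup.mk' N) A)) = ⊥) : radIn A ≤ N := by
  have h2 : solvableRadical ↥(Subgroup.map (QuotientGroup.mk' N) A) = ⊥ := by
    apply sRad_eq_bot_of_mulEquiv (Subgroup.equivMapOfInjective _ e.toMonoidHom e.injective).symm h
  have h3 : radIn (Subgroup.map (QuotientGroup.mk' N) A) = ⊥ := (sRad_eq_bot_iff _).mp h2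
  have h4 : Subgroup.map (QuotientGroup.mk' N) (radIn A) = ⊥ := by
    rw [← le_bot_iff, ← h3]
    apply le_radIn
    refine ⟨normalIn_map_hom _ ?_, isSolvable_map _ _ (radIn_mem A).2⟩
    exact (radIn_mem A).1
  rw [Subgroup.map_eq_bot_iff, QuotientGroup.ker_mk'] at h4
  exact h4

theorem radIn_normal [Finite G] (M : Subgroup G) [hM : M.Normal] : (radIn M).Normal := by
  apply normal_of_conj_map
  intro g
  rw [radIn_map (MulAut.conj g) M, normal_map_conj hM]

end QuotHelpers

section MoreHelpers

variable {G : Type} [Group G]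

/-- `N / (C ∩ N) ≅` image of `N` in `G/C`. -/
noncomputable def quotSubgroupOfIso (C N : Subgroup G) [C.Normal] :
    (↥N ⧸ C.subgroupOf N) ≃* ↥(Subgroup.map (QuotientGroup.mk' C) N) := by
  set θ : ↥N →* G ⧸ C := (QuotientGroup.mk' C).comp N.subtype with hθ
  have hker : θ.ker = C.subgroupOf N := by
    ext x
    simp only [MonoidHom.mem_ker, hθ, MonoidHom.comp_apply, Subgroup.mem_subgroupOf]
    rw [show (QuotientGroup.mk' C) (N.subtype x) = ((x : G) : G ⧸ C) from rfl]
    exact QuotientGroup.eq_one_iff _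
  have hrange : θ.range = Subgroup.map (QuotientGroup.mk' C) N := by
    rw [hθ, MonoidHom.range_comp, Subgroup.range_subtype]
  exact (QuotientGroup.quotientMulEquivOfEq hker.symm).trans
    ((QuotientGroup.quotientKerEquivRange θ).trans (MulEquiv.subgroupCongr hrange))

theorem inf_subgroupOf_left' (N1 N2 : Subgroup G) :
    (N1 ⊓ N2).subgroupOf N1 = N2.subgroupOf N1 := by
  ext x
  simp only [Subgroup.mem_subgroupOf, Subgroup.mem_inf]
  exact ⟨fun h => h.2, fun h => ⟨x.2, h⟩⟩

theorem inf_subgroupOf_right' (N1 N2 : Subgroup G) :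
    (N1 ⊓ N2).subgroupOf N2 = N1.subgroupOf N2 := by
  ext x
  simp only [Subgroup.mem_subgroupOf, Subgroup.mem_inf]
  exact ⟨fun h => h.1, fun h => ⟨h, x.2⟩⟩

theorem trf_subgroupOf {N1 N2 : Subgroup G} (φ : ↥N1 ≃* ↥N2) (X : Subgroup G) :
    Subgroup.map φ.toMonoidHom (X.subgroupOf N1) = (trf φ X).subgroupOf N2 := by
  ext y
  simp only [Subgroup.mem_map, Subgroup.mem_subgroupOf]
  constructor
  · rintro ⟨a, ha, rfl⟩
    exact mem_trf.mpr ⟨a, ha, rfl⟩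
  · intro hy
    obtain ⟨a, ha, hay⟩ := mem_trf.mp hy
    exact ⟨a, ha, Subtype.ext hay⟩

theorem conj_map_conj_inv (g : G) (Q : Subgroup G) :
    Subgroup.map (MulAut.conj g).toMonoidHom (Subgroup.map (MulAut.conj g⁻¹).toMonoidHom Q)
      = Q := by
  rw [Subgroup.map_map]
  convert Subgroup.map_id Q using 2
  ext x
  simp [MulAut.conj_apply]
  group

theorem normal_sSup_of_conj_stable (Sset : Set (Subgroup G))
    (h : ∀ (g : G), ∀ Q ∈ Sset, Subgroup.map (MulAut.conj g).toMonoidHom Q ∈ Sset) :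
    (sSup Sset).Normal := by
  apply normal_of_conj_map
  intro g
  rw [map_sSup_equiv]
  apply le_antisymm
  · apply sSup_le
    rintro _ ⟨Q, hQ, rfl⟩
    exact le_sSup (h g Q hQ)
  · apply sSup_le
    intro Q hQ
    have : Q = Subgroup.map (MulAut.conj g).toMonoidHom
        (Subgroup.map (MulAut.conj g⁻¹).toMonoidHom Q) := (conj_map_conj_inv g Q).symm
    rw [this]
    exact le_sSup ⟨_, h g⁻¹ Q hQ, rfl⟩

theorem subnormal_cross {N1 N2 Q : Subgroup G} (hN1 : N1.Normal)
    (h : Subnormal Q N1) (hle : Q ≤ N2) : Subnormal Q N2 := by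
  have h1 := h.inf_right N2
  rw [inf_eq_left.mpr hle] at h1
  refine h1.step ⟨inf_le_right, ?_⟩
  rintro b hb a ⟨ha1, ha2⟩
  exact ⟨hN1.conj_mem a ha1 b, N2.mul_mem (N2.mul_mem hb ha2) (N2.inv_mem hb)⟩

theorem trf_bot {N1 N2 : Subgroup G} (φ : ↥N1 ≃* ↥N2) : trf φ ⊥ = ⊥ := by
  rw [eq_bot_iff]
  rintro y hy
  obtain ⟨a, ha, rfl⟩ := mem_trf.mp hy
  rw [Subgroup.mem_bot] at ha ⊢
  have : a = 1 := Subtype.ext ha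
  rw [this]
  simp

end MoreHelpers

section Core

theorem core (L1 : Type) [Group L1] [Finite L1] [Nontrivial L1]
    (L2 : Type) [Group L2] [Finite L2] [Nontrivial L2]
    (hrad : ∀ (K1 : Subgroup L1) (K2 : Subgroup L2), IsSimsPair L1 L2 K1 K2 →
      solvableRadical ↥K1 = ⊥ ∨ solvableRadical ↥K2 = ⊥) :
    ∀ (n : ℕ) (G : Type) [Group G] [Finite G] (N1 N2 : Subgroup G)
      [N1.Normal] [N2.Normal] (φ : ↥N1 ≃* ↥N2)
      (e1 : (G ⧸ N1) ≃* L1) (e2 : (G ⧸ N2) ≃* L2), Nat.card G ≤ n →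
      ∃ (M1 : Subgroup L1) (M2 : Subgroup L2) (h1 : M1.Normal) (h2 : M2.Normal),
        M1 ≠ ⊥ ∧ M2 ≠ ⊥ ∧ Nonempty (↥M1 ≃* ↥M2) ∧
        (letI := h1; letI := h2; Compatible (L1 ⧸ M1) (L2 ⧸ M2)) := by
  intro n
  induction n with
  | zero =>
    intro G _ _ N1 N2 _ _ φ e1 e2 hcard
    exfalso
    have : 0 < Nat.card G := Nat.card_pos
    omega
  | succ n ih =>
    intro G iG fG N1 N2 hN1 hN2 φ e1 e2 hcard
    classical
    -- the recursion step modulo a `φ`-invariant normal subgroup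
    have doQuot : ∀ (C : Subgroup G), C.Normal → C ≠ ⊥ → C ≤ N1 → trf φ C = C →
        ∃ (M1 : Subgroup L1) (M2 : Subgroup L2) (h1 : M1.Normal) (h2 : M2.Normal),
        M1 ≠ ⊥ ∧ M2 ≠ ⊥ ∧ Nonempty (↥M1 ≃* ↥M2) ∧
        (letI := h1; letI := h2; Compatible (L1 ⧸ M1) (L2 ⧸ M2)) := by
      intro C hCn hCbot hCle hCinv
      haveI := hCn
      have hCle2 : C ≤ N2 := by rw [← hCinv]; exact trf_le_right φ C
      haveI hm1 : (Subgroup.map (QuotientGroup.mk' C) N1).Normal :=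
        hN1.map _ (QuotientGroup.mk'_surjective C)
      haveI hm2 : (Subgroup.map (QuotientGroup.mk' C) N2).Normal :=
        hN2.map _ (QuotientGroup.mk'_surjective C)
      have hmap : Subgroup.map φ.toMonoidHom (C.subgroupOf N1) = C.subgroupOf N2 := by
        rw [trf_subgroupOf φ C, hCinv]
      have φ' : ↥(Subgroup.map (QuotientGroup.mk' C) N1) ≃*
          ↥(Subgroup.map (QuotientGroup.mk' C) N2) :=
        (quotSubgroupOfIso C N1).symm.trans
          ((QuotientGroup.congr (C.subgroupOf N1) (C.subgroupOf N2) φ hmap).trans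
            (quotSubgroupOfIso C N2))
      have e1' : ((G ⧸ C) ⧸ Subgroup.map (QuotientGroup.mk' C) N1) ≃* L1 :=
        (QuotientGroup.quotientQuotientEquivQuotient C N1 hCle).trans e1
      have e2' : ((G ⧸ C) ⧸ Subgroup.map (QuotientGroup.mk' C) N2) ≃* L2 :=
        (QuotientGroup.quotientQuotientEquivQuotient C N2 hCle2).trans e2
      have hcard' : Nat.card (G ⧸ C) ≤ n := by
        have h1 := Subgroup.card_eq_card_quotient_mul_card_subgroup C
        have h2 : 1 < Nat.card ↥C := (Subgroup.one_lt_card_iff_ne_bot C).mpr hCbot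
        have h3 : 0 < Nat.card (G ⧸ C) := Nat.card_pos
        have h4 : Nat.card (G ⧸ C) * 2 ≤ Nat.card (G ⧸ C) * Nat.card ↥C :=
          Nat.mul_le_mul_left _ h2
        omega
      exact ih (G ⧸ C) (Subgroup.map (QuotientGroup.mk' C) N1)
        (Subgroup.map (QuotientGroup.mk' C) N2) φ' e1' e2' hcard'
    by_cases hNN : N1 = N2
    · -- case (a) : N1 = N2, take M1 = M2 = ⊤
      haveI : Subsingleton (L1 ⧸ (⊤ : Subgroup L1)) := QuotientGroup.subsingleton_quotient_top
      haveI : Subsingleton (L2 ⧸ (⊤ : Subgroup L2)) := QuotientGroup.subsingleton_quotient_top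
      refine ⟨⊤, ⊤, inferInstance, inferInstance, top_ne_bot_of_nontrivial,
        top_ne_bot_of_nontrivial, ?_, ?_⟩
      · have e12 : L1 ≃* L2 := e1.symm.trans ((QuotientGroup.quotientMulEquivOfEq hNN).trans e2)
        exact ⟨Subgroup.topEquiv.trans (e12.trans Subgroup.topEquiv.symm)⟩
      · exact compatible_of_iso _ _ ⟨mulEquivOfSubsingleton⟩
    have hN1top : N1 ≠ ⊤ := by
      intro htop
      subst htop
      haveI : Nontrivial (G ⧸ (⊤ : Subgroup G)) := e1.toEquiv.nontrivial
      haveI : Subsingleton (G ⧸ (⊤ : Subgroup G)) := QuotientGroup.subsingleton_quotient_top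
      exact false_of_nontrivial_of_subsingleton (G ⧸ (⊤ : Subgroup G))
    have hN1ne : N1 ≠ ⊥ := by
      intro hbot
      apply hNN
      have hcard2 : Nat.card ↥N2 = Nat.card ↥N1 := Nat.card_congr φ.toEquiv.symm
      rw [hbot, Subgroup.card_eq_one.mpr rfl] at hcard2
      rw [hbot, eq_comm, ← Subgroup.card_eq_one, hcard2]
    by_cases hsup : N1 ⊔ N2 = ⊤
    · -- case (e) : G = N1 N2 ; recurse inside N1
      have hDle1 : N1 ⊓ N2 ≤ N1 := inf_le_left
      have hDle2 : N1 ⊓ N2 ≤ N2 := inf_le_right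
      haveI hDn : (N1 ⊓ N2).Normal := inferInstance
      have hAnormIn : NormalIn (trf φ.symm (N1 ⊓ N2)) N1 := by
        have h0 : NormalIn (N1 ⊓ N2) N2 := NormalIn.of_normal hDn N2 hDle2
        have := trf_normalIn φ.symm (le_refl N2) h0
        rwa [trf_self φ.symm] at this
      haveI hAn : ((trf φ.symm (N1 ⊓ N2)).subgroupOf N1).Normal :=
        (normalIn_iff_subgroupOf_normal hAnormIn.1).mp hAnormIn
      haveI hBn : ((N1 ⊓ N2).subgroupOf N1).Normal := inferInstance
      have φAB : ↥((trf φ.symm (N1 ⊓ N2)).subgroupOf N1) ≃* ↥((N1 ⊓ N2).subgroupOf N1) := by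
        have i1 : ↥((trf φ.symm (N1 ⊓ N2)).subgroupOf N1) ≃* ↥(trf φ.symm (N1 ⊓ N2)) :=
          Subgroup.subgroupOfEquivOfLe hAnormIn.1
        have i2 : ↥(N1 ⊓ N2) ≃* ↥(trf φ.symm (N1 ⊓ N2)) := (trf_nonempty_iso φ.symm hDle2).some
        have i3 : ↥((N1 ⊓ N2).subgroupOf N1) ≃* ↥(N1 ⊓ N2) := Subgroup.subgroupOfEquivOfLe hDle1
        exact i1.trans (i2.symm.trans i3.symm)
      have eB : (↥N1 ⧸ (N1 ⊓ N2).subgroupOf N1) ≃* L2 := by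
        have j1 : (↥N1 ⧸ (N1 ⊓ N2).subgroupOf N1) ≃* (↥N1 ⧸ N2.subgroupOf N1) :=
          QuotientGroup.quotientMulEquivOfEq (inf_subgroupOf_left' N1 N2)
        have j2 := QuotientGroup.quotientInfEquivProdNormalQuotient N1 N2
        have j3 := quotSubgroupOfIso N2 (N1 ⊔ N2)
        have j4 : ↥(Subgroup.map (QuotientGroup.mk' N2) (N1 ⊔ N2)) ≃*
            ↥(⊤ : Subgroup (G ⧸ N2)) := MulEquiv.subgroupCongr
          (by rw [hsup, Subgroup.map_top_of_surjective _ (QuotientGroup.mk'_surjective N2)])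
        exact j1.trans (j2.trans (j3.trans (j4.trans (Subgroup.topEquiv.trans e2))))
      have eA : (↥N1 ⧸ (trf φ.symm (N1 ⊓ N2)).subgroupOf N1) ≃* L1 := by
        have hmapA : Subgroup.map φ.toMonoidHom ((trf φ.symm (N1 ⊓ N2)).subgroupOf N1)
            = N1.subgroupOf N2 := by
          rw [trf_subgroupOf φ, trf_trf_symm φ hDle2, inf_subgroupOf_right']
        have k0 := QuotientGroup.congr ((trf φ.symm (N1 ⊓ N2)).subgroupOf N1)
          (N1.subgroupOf N2) φ hmapA
        have k2 := QuotientGroup.quotientInfEquivProdNormalQuotient N2 N1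
        have k3 := quotSubgroupOfIso N1 (N2 ⊔ N1)
        have hsup' : N2 ⊔ N1 = ⊤ := by rw [sup_comm]; exact hsup
        have k4 : ↥(Subgroup.map (QuotientGroup.mk' N1) (N2 ⊔ N1)) ≃*
            ↥(⊤ : Subgroup (G ⧸ N1)) := MulEquiv.subgroupCongr
          (by rw [hsup', Subgroup.map_top_of_surjective _ (QuotientGroup.mk'_surjective N1)])
        exact k0.trans (k2.trans (k3.trans (k4.trans (Subgroup.topEquiv.trans e1))))
      have hcard' : Nat.card ↥N1 ≤ n := by
        have h5 : Nat.card ↥N1 < Nat.card ↥(⊤ : Subgroup G) :=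
          card_lt_of_lt (lt_top_iff_ne_top.mpr hN1top)
        have h6 : Nat.card ↥(⊤ : Subgroup G) = Nat.card G :=
          Nat.card_congr Subgroup.topEquiv.toEquiv
        omega
      exact ih ↥N1 ((trf φ.symm (N1 ⊓ N2)).subgroupOf N1) ((N1 ⊓ N2).subgroupOf N1)
        φAB eA eB hcard'
    · -- main case : N1 ⊔ N2 proper
      haveI hX2n : (Subgroup.map (QuotientGroup.mk' N1) N2).Normal :=
        hN2.map _ (QuotientGroup.mk'_surjective N1)
      haveI hX1n : (Subgroup.map (QuotientGroup.mk' N2) N1).Normal :=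
        hN1.map _ (QuotientGroup.mk'_surjective N2)
      haveI hK1n : (Subgroup.map e1.toMonoidHom
          (Subgroup.map (QuotientGroup.mk' N1) N2)).Normal := hX2n.map _ e1.surjective
      haveI hK2n : (Subgroup.map e2.toMonoidHom
          (Subgroup.map (QuotientGroup.mk' N2) N1)).Normal := hX1n.map _ e2.surjective
      haveI hSn : (N1 ⊔ N2).Normal := inferInstance
      haveI hmS1 : (Subgroup.map (QuotientGroup.mk' N1) (N1 ⊔ N2)).Normal :=
        hSn.map _ (QuotientGroup.mk'_surjective N1)
      haveI hmS2 : (Subgroup.map (QuotientGroup.mk' N2) (N1 ⊔ N2)).Normal :=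
        hSn.map _ (QuotientGroup.mk'_surjective N2)
      have hmapS1 : Subgroup.map (QuotientGroup.mk' N1) (N1 ⊔ N2)
          = Subgroup.map (QuotientGroup.mk' N1) N2 := by
        rw [Subgroup.map_sup]
        have : Subgroup.map (QuotientGroup.mk' N1) N1 = ⊥ := by
          rw [Subgroup.map_eq_bot_iff, QuotientGroup.ker_mk']
        rw [this, bot_sup_eq]
      have hmapS2 : Subgroup.map (QuotientGroup.mk' N2) (N1 ⊔ N2)
          = Subgroup.map (QuotientGroup.mk' N2) N1 := by
        rw [Subgroup.map_sup]
        have : Subgroup.map (QuotientGroup.mk' N2) N2 = ⊥ := by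
          rw [Subgroup.map_eq_bot_iff, QuotientGroup.ker_mk']
        rw [this, sup_bot_eq]
      have c1 : ((G ⧸ N1) ⧸ Subgroup.map (QuotientGroup.mk' N1) N2) ≃*
          (L1 ⧸ Subgroup.map e1.toMonoidHom (Subgroup.map (QuotientGroup.mk' N1) N2)) :=
        QuotientGroup.congr _ _ e1 rfl
      have c2 : ((G ⧸ N2) ⧸ Subgroup.map (QuotientGroup.mk' N2) N1) ≃*
          (L2 ⧸ Subgroup.map e2.toMonoidHom (Subgroup.map (QuotientGroup.mk' N2) N1)) :=
        QuotientGroup.congr _ _ e2 rfl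
      have hQuotK1 : (L1 ⧸ Subgroup.map e1.toMonoidHom
          (Subgroup.map (QuotientGroup.mk' N1) N2)) ≃* (G ⧸ (N1 ⊔ N2)) :=
        c1.symm.trans ((QuotientGroup.quotientMulEquivOfEq hmapS1).symm.trans
          (QuotientGroup.quotientQuotientEquivQuotient N1 (N1 ⊔ N2) le_sup_left))
      have hQuotK2 : (L2 ⧸ Subgroup.map e2.toMonoidHom
          (Subgroup.map (QuotientGroup.mk' N2) N1)) ≃* (G ⧸ (N1 ⊔ N2)) :=
        c2.symm.trans ((QuotientGroup.quotientMulEquivOfEq hmapS2).symm.trans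
          (QuotientGroup.quotientQuotientEquivQuotient N2 (N1 ⊔ N2) le_sup_right))
      haveI : Nontrivial (G ⧸ (N1 ⊔ N2)) := by
        have hg : ∃ g : G, g ∉ N1 ⊔ N2 := by
          by_contra h
          push_neg at h
          exact hsup ((Subgroup.eq_top_iff' (N1 ⊔ N2)).mpr h)
        obtain ⟨g, hg⟩ := hg
        exact ⟨⟨QuotientGroup.mk g, 1, fun h => hg ((QuotientGroup.eq_one_iff g).mp h)⟩⟩
      have hsims : IsSimsPair L1 L2
          (Subgroup.map e1.toMonoidHom (Subgroup.map (QuotientGroup.mk' N1) N2))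
          (Subgroup.map e2.toMonoidHom (Subgroup.map (QuotientGroup.mk' N2) N1)) := by
        refine ⟨hK1n, hK2n, ?_, ⟨hQuotK1.trans hQuotK2.symm⟩, ?_⟩
        · haveI i1 : (N1.subgroupOf (N1 ⊔ N2)).Normal := inferInstance
          haveI i2 : (N2.subgroupOf (N1 ⊔ N2)).Normal := inferInstance
          refine ⟨↥(N1 ⊔ N2), inferInstance, inferInstance, N1.subgroupOf (N1 ⊔ N2),
            N2.subgroupOf (N1 ⊔ N2), i1, i2, ⟨?_⟩, ⟨?_⟩, ⟨?_⟩⟩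
          · exact (Subgroup.subgroupOfEquivOfLe le_sup_left).trans
              (φ.trans (Subgroup.subgroupOfEquivOfLe le_sup_right).symm)
          · exact (helperQ N1 N2 (N1 ⊔ N2) le_sup_left le_sup_right le_rfl).trans
              (Subgroup.equivMapOfInjective _ e1.toMonoidHom e1.injective)
          · exact (helperQ N2 N1 (N1 ⊔ N2) le_sup_right le_sup_left
              (le_of_eq (sup_comm N1 N2))).trans
              (Subgroup.equivMapOfInjective _ e2.toMonoidHom e2.injective)
        · exact hQuotK1.toEquiv.nontrivial
      have hinv : trf φ (radIn N1) = radIn N1 := by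
        rcases hrad _ _ hsims with hb | hb
        · have hle21 : radIn N2 ≤ N1 := radical_transfer e1 hb
          have hle : radIn N2 ≤ radIn N1 :=
            le_radIn ⟨NormalIn.of_normal (radIn_normal N2) N1 hle21, (radIn_mem N2).2⟩
          have hcardr : Nat.card ↥(radIn N1) ≤ Nat.card ↥(radIn N2) := by
            have h7 := trf_card φ (radIn_le N1)
            rw [trf_radIn φ] at h7
            omega
          exact (trf_radIn φ).trans (eq_of_le_of_card_le hle hcardr)
        · have hle12 : radIn N1 ≤ N2 := radical_transfer e2 hb
          have hle : radIn N1 ≤ radIn N2 :=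
            le_radIn ⟨NormalIn.of_normal (radIn_normal N1) N2 hle12, (radIn_mem N1).2⟩
          have hcardr : Nat.card ↥(radIn N2) ≤ Nat.card ↥(radIn N1) := by
            have h7 := trf_card φ (radIn_le N1)
            rw [trf_radIn φ] at h7
            omega
          exact (trf_radIn φ).trans (eq_of_le_of_card_le hle hcardr).symm
      by_cases hC : radIn N1 = ⊥
      · -- components phase
        have hr2 : radIn N2 = ⊥ := by rw [← trf_radIn φ, hC, trf_bot]
        have hconjinj : ∀ g : G, Function.Injective ⇑(MulAut.conj g).toMonoidHom :=
          fun g => (MulAut.conj g).injective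
        have hrr1 : ∀ A, NormalIn A N1 → IsSolvable ↥A → A = ⊥ := fun A hA hs =>
          le_bot_iff.mp (hC ▸ le_radIn ⟨hA, hs⟩)
        have hrr2 : ∀ A, NormalIn A N2 → IsSolvable ↥A → A = ⊥ := fun A hA hs =>
          le_bot_iff.mp (hr2 ▸ le_radIn ⟨hA, hs⟩)
        have hmem1 : ∀ Q ∈ {Q : Subgroup G | Subnormal Q N1 ∧ SimpleNA Q}, Q ≤ N1 :=
          fun Q hQ => hQ.1.le
        have hmem2 : ∀ Q ∈ {Q : Subgroup G | Subnormal Q N2 ∧ SimpleNA Q}, Q ≤ N2 :=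
          fun Q hQ => hQ.1.le
        have hmap12 : ∀ Q ∈ {Q : Subgroup G | Subnormal Q N1 ∧ SimpleNA Q},
            trf φ Q ∈ {Q : Subgroup G | Subnormal Q N2 ∧ SimpleNA Q} := by
          rintro Q ⟨hsub, hsim⟩
          constructor
          · have := trf_subnormal φ hsub le_rfl
            rwa [trf_self φ] at this
          · exact hsim.of_iso (trf_nonempty_iso φ hsub.le).some
        have hmap21 : ∀ Q ∈ {Q : Subgroup G | Subnormal Q N2 ∧ SimpleNA Q},
            trf φ.symm Q ∈ {Q : Subgroup G | Subnormal Q N1 ∧ SimpleNA Q} := by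
          rintro Q ⟨hsub, hsim⟩
          constructor
          · have := trf_subnormal φ.symm hsub le_rfl
            rwa [trf_self φ.symm] at this
          · exact hsim.of_iso (trf_nonempty_iso φ.symm hsub.le).some
        have hrt1 : ∀ Q ∈ {Q : Subgroup G | Subnormal Q N1 ∧ SimpleNA Q},
            trf φ.symm (trf φ Q) = Q := by
          intro Q hQ
          rw [show trf φ Q = trf φ.symm.symm Q from rfl]
          exact trf_trf_symm φ.symm (hmem1 Q hQ)
        have hrt2 : ∀ Q ∈ {Q : Subgroup G | Subnormal Q N2 ∧ SimpleNA Q},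
            trf φ (trf φ.symm Q) = Q := fun Q hQ => trf_trf_symm φ (hmem2 Q hQ)
        set C1f := (Set.toFinite {Q : Subgroup G | Subnormal Q N1 ∧ SimpleNA Q}).toFinset
          with hC1f
        set C2f := (Set.toFinite {Q : Subgroup G | Subnormal Q N2 ∧ SimpleNA Q}).toFinset
          with hC2f
        have hC1fmem : ∀ Q, Q ∈ C1f ↔ (Subnormal Q N1 ∧ SimpleNA Q) := by
          intro Q; rw [hC1f, Set.Finite.mem_toFinset]; rfl
        have hC2fmem : ∀ Q, Q ∈ C2f ↔ (Subnormal Q N2 ∧ SimpleNA Q) := by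
          intro Q; rw [hC2f, Set.Finite.mem_toFinset]; rfl
        have hmm : C1f.val.map isoCl = C2f.val.map isoCl := by
          apply map_isoCl_eq_of_bij C1f C2f (trf φ) (trf φ.symm)
          · intro a ha; rw [hC2fmem]; exact hmap12 a ((hC1fmem a).mp ha)
          · intro b hb; rw [hC1fmem]; exact hmap21 b ((hC2fmem b).mp hb)
          · intro a ha; exact hrt1 a ((hC1fmem a).mp ha)
          · intro b hb; exact hrt2 b ((hC2fmem b).mp hb)
          · intro a ha
            exact isoCl_eq ⟨(trf_nonempty_iso φ (hmem1 a ((hC1fmem a).mp ha))).some.symm⟩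
        set Z1f := C1f.filter (fun Q => ¬ Q ≤ N2) with hZ1f
        set Z2f := C2f.filter (fun Q => ¬ Q ≤ N1) with hZ2f
        have hZ1mem : ∀ Q, Q ∈ Z1f ↔ ((Subnormal Q N1 ∧ SimpleNA Q) ∧ ¬ Q ≤ N2) := by
          intro Q; rw [hZ1f, Finset.mem_filter, hC1fmem]
        have hZ2mem : ∀ Q, Q ∈ Z2f ↔ ((Subnormal Q N2 ∧ SimpleNA Q) ∧ ¬ Q ≤ N1) := by
          intro Q; rw [hZ2f, Finset.mem_filter, hC2fmem]
        have hΔ : C1f.filter (fun Q => Q ≤ N2) = C2f.filter (fun Q => Q ≤ N1) := by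
          ext Q
          simp only [Finset.mem_filter, hC1fmem, hC2fmem]
          constructor
          · rintro ⟨⟨hsub, hsim⟩, hle⟩
            exact ⟨⟨subnormal_cross hN1 hsub hle, hsim⟩, hsub.le⟩
          · rintro ⟨⟨hsub, hsim⟩, hle⟩
            exact ⟨⟨subnormal_cross hN2 hsub hle, hsim⟩, hsub.le⟩
        have hmmZ : Z1f.val.map isoCl = Z2f.val.map isoCl := by
          have hsplit1 : (C1f.filter (fun Q => Q ≤ N2)).val.map isoCl + Z1f.val.map isoCl
              = C1f.val.map isoCl := by
            rw [hZ1f, Finset.filter_val, Finset.filter_val, ← Multiset.map_add,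
              Multiset.filter_add_not]
          have hsplit2 : (C2f.filter (fun Q => Q ≤ N1)).val.map isoCl + Z2f.val.map isoCl
              = C2f.val.map isoCl := by
            rw [hZ2f, Finset.filter_val, Finset.filter_val, ← Multiset.map_add,
              Multiset.filter_add_not]
          have hchain := hsplit1.trans (hmm.trans hsplit2.symm)
          rw [hΔ] at hchain
          exact add_left_cancel hchain
        by_cases hZ : Z1f = ∅
        · -- no external components : everything is φ-invariant, recurse
          have hget1 : ∀ Q ∈ {Q : Subgroup G | Subnormal Q N1 ∧ SimpleNA Q}, Q ≤ N2 := by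
            intro Q hQ
            by_contra hle
            have : Q ∈ Z1f := (hZ1mem Q).mpr ⟨hQ, hle⟩
            rw [hZ] at this
            exact absurd this (Finset.notMem_empty Q)
          have hZ2 : Z2f = ∅ := by
            rw [hZ] at hmmZ
            simp only [Finset.empty_val, Multiset.map_zero] at hmmZ
            rw [eq_comm, Multiset.map_eq_zero] at hmmZ
            exact Finset.val_eq_zero.mp hmmZ
          have hget2 : ∀ Q ∈ {Q : Subgroup G | Subnormal Q N2 ∧ SimpleNA Q}, Q ≤ N1 := by
            intro Q hQ
            by_contra hle
            have : Q ∈ Z2f := (hZ2mem Q).mpr ⟨hQ, hle⟩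
            rw [hZ2] at this
            exact absurd this (Finset.notMem_empty Q)
          have hCeqset : {Q : Subgroup G | Subnormal Q N2 ∧ SimpleNA Q}
              = {Q : Subgroup G | Subnormal Q N1 ∧ SimpleNA Q} := by
            ext Q
            exact ⟨fun hQ => ⟨subnormal_cross hN2 hQ.1 (hget2 Q hQ), hQ.2⟩,
              fun hQ => ⟨subnormal_cross hN1 hQ.1 (hget1 Q hQ), hQ.2⟩⟩
          have hCsup : trf φ (sSup {Q : Subgroup G | Subnormal Q N1 ∧ SimpleNA Q})
              = sSup {Q : Subgroup G | Subnormal Q N1 ∧ SimpleNA Q} := by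
            rw [trf_sSup_eq φ hmem1 hmem2 hmap12 hmap21, hCeqset]
          obtain ⟨Q0, hQ0sub, hQ0sim⟩ := exists_comp (Nat.card ↥N1) N1 le_rfl hN1ne hrr1
          have hQ0 : Q0 ∈ {Q : Subgroup G | Subnormal Q N1 ∧ SimpleNA Q} := ⟨hQ0sub, hQ0sim⟩
          have hne : sSup {Q : Subgroup G | Subnormal Q N1 ∧ SimpleNA Q} ≠ ⊥ := fun h =>
            hQ0sim.ne_bot (le_bot_iff.mp (h ▸ le_sSup hQ0))
          have hnorm : (sSup {Q : Subgroup G | Subnormal Q N1 ∧ SimpleNA Q}).Normal := by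
            apply normal_sSup_of_conj_stable
            intro g Q hQ
            constructor
            · have := subnormal_map (MulAut.conj g) hQ.1
              rwa [normal_map_conj hN1] at this
            · exact hQ.2.of_iso (Subgroup.equivMapOfInjective Q
                (MulAut.conj g).toMonoidHom (hconjinj g))
          exact doQuot _ hnorm hne (sSup_le hmem1) hCsup
        · -- external components exist on both sides : build M1, M2
          have hcent2 : ∀ Q ∈ Z2f, Q ≤ Subgroup.centralizer (N1 : Set G) := by
            intro Q hQ
            obtain ⟨⟨hsub, hsim⟩, hnle⟩ := (hZ2mem Q).mp hQ
            have htop : Subnormal Q ⊤ := hsub.step (NormalIn.of_normal hN2 ⊤ le_top)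
            rcases comp_vs_normal htop hsim N1 (NormalIn.of_normal hN1 ⊤ le_top) with h | h
            · exact absurd h hnle
            · exact Subgroup.commutator_eq_bot_iff_le_centralizer.mp h
          have hcent1 : ∀ Q ∈ Z1f, Q ≤ Subgroup.centralizer (N2 : Set G) := by
            intro Q hQ
            obtain ⟨⟨hsub, hsim⟩, hnle⟩ := (hZ1mem Q).mp hQ
            have htop : Subnormal Q ⊤ := hsub.step (NormalIn.of_normal hN1 ⊤ le_top)
            rcases comp_vs_normal htop hsim N2 (NormalIn.of_normal hN2 ⊤ le_top) with h | h
            · exact absurd h hnle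
            · exact Subgroup.commutator_eq_bot_iff_le_centralizer.mp h
          have hZN : ∀ (N : Subgroup G), (∀ A, NormalIn A N → IsSolvable ↥A → A = ⊥) →
              Subgroup.centralizer (N : Set G) ⊓ N = ⊥ := by
            intro N hrr
            apply hrr
            · refine ⟨inf_le_right, ?_⟩
              rintro b hb a ⟨ha1, ha2⟩
              have hco : b * a = a * b := Subgroup.mem_centralizer_iff.mp ha1 b hb
              have heq : b * a * b⁻¹ = a := by rw [hco]; group
              rw [heq]; exact ⟨ha1, ha2⟩
            · apply isSolvable_of_comm
              rintro ⟨x, hx1, hx2⟩ ⟨y, hy1, hy2⟩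
              have hxy : x * y = y * x := Subgroup.mem_centralizer_iff.mp hy1 x hx2
              exact Subtype.ext hxy
          have hE2N1 : Z2f.val.sup ⊓ N1 = ⊥ := by
            have hle : Z2f.val.sup ≤ Subgroup.centralizer (N1 : Set G) :=
              Multiset.sup_le.mpr (fun Q hQ => hcent2 Q hQ)
            exact le_bot_iff.mp ((hZN N1 hrr1) ▸ inf_le_inf_right N1 hle)
          have hE1N2 : Z1f.val.sup ⊓ N2 = ⊥ := by
            have hle : Z1f.val.sup ≤ Subgroup.centralizer (N2 : Set G) :=
              Multiset.sup_le.mpr (fun Q hQ => hcent1 Q hQ)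
            exact le_bot_iff.mp ((hZN N2 hrr2) ▸ inf_le_inf_right N2 hle)
          have hE2cent : Z2f.val.sup ≤ Subgroup.centralizer (N1 : Set G) :=
            Multiset.sup_le.mpr (fun Q hQ => hcent2 Q hQ)
          have hE1cent : Z1f.val.sup ≤ Subgroup.centralizer (N2 : Set G) :=
            Multiset.sup_le.mpr (fun Q hQ => hcent1 Q hQ)
          have hZ1ne : Z1f.Nonempty := Finset.nonempty_iff_ne_empty.mpr hZ
          have hZ2ne : Z2f.Nonempty := by
            have hcards := congrArg Multiset.card hmmZ
            rw [Multiset.card_map, Multiset.card_map] at hcards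
            have hc2 : Z1f.card = Z2f.card := hcards
            rw [← Finset.card_pos] at hZ1ne ⊢
            omega
          have hE1ne : Z1f.val.sup ≠ ⊥ := by
            obtain ⟨Q, hQ⟩ := hZ1ne
            intro h
            exact ((hZ1mem Q).mp hQ).1.2.ne_bot
              (le_bot_iff.mp (h ▸ Multiset.le_sup (Finset.mem_val.mpr hQ)))
          have hE2ne : Z2f.val.sup ≠ ⊥ := by
            obtain ⟨Q, hQ⟩ := hZ2ne
            intro h
            exact ((hZ2mem Q).mp hQ).1.2.ne_bot
              (le_bot_iff.mp (h ▸ Multiset.le_sup (Finset.mem_val.mpr hQ)))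
          -- identify with sSup for normality
          have hE1sSup : Z1f.val.sup
              = sSup {Q : Subgroup G | (Subnormal Q N1 ∧ SimpleNA Q) ∧ ¬ Q ≤ N2} := by
            have hcoe : ↑Z1f = {Q : Subgroup G | (Subnormal Q N1 ∧ SimpleNA Q) ∧ ¬ Q ≤ N2} := by
              ext Q
              rw [Finset.mem_coe, hZ1mem]
              rfl
            rw [← hcoe, ← Finset.sup_id_eq_sSup, Finset.sup_def, Multiset.map_id]
          have hE2sSup : Z2f.val.sup
              = sSup {Q : Subgroup G | (Subnormal Q N2 ∧ SimpleNA Q) ∧ ¬ Q ≤ N1} := by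
            have hcoe : ↑Z2f = {Q : Subgroup G | (Subnormal Q N2 ∧ SimpleNA Q) ∧ ¬ Q ≤ N1} := by
              ext Q
              rw [Finset.mem_coe, hZ2mem]
              rfl
            rw [← hcoe, ← Finset.sup_id_eq_sSup, Finset.sup_def, Multiset.map_id]
          have hE2norm : (Z2f.val.sup).Normal := by
            rw [hE2sSup]
            apply normal_sSup_of_conj_stable
            rintro g Q ⟨⟨hsub, hsim⟩, hnle⟩
            refine ⟨⟨?_, hsim.of_iso (Subgroup.equivMapOfInjective Q
              (MulAut.conj g).toMonoidHom (hconjinj g))⟩, ?_⟩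
            · have := subnormal_map (MulAut.conj g) hsub
              rwa [normal_map_conj hN2] at this
            · intro hle
              apply hnle
              have hle2 : Subgroup.map (MulAut.conj g).toMonoidHom Q
                  ≤ Subgroup.map (MulAut.conj g).toMonoidHom N1 := by
                rw [normal_map_conj hN1]; exact hle
              exact (Subgroup.map_le_map_iff_of_injective (hconjinj g)).mp hle2
          have hE1norm : (Z1f.val.sup).Normal := by
            rw [hE1sSup]
            apply normal_sSup_of_conj_stable
            rintro g Q ⟨⟨hsub, hsim⟩, hnle⟩
            refine ⟨⟨?_, hsim.of_iso (Subgroup.equivMapOfInjective Q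
              (MulAut.conj g).toMonoidHom (hconjinj g))⟩, ?_⟩
            · have := subnormal_map (MulAut.conj g) hsub
              rwa [normal_map_conj hN1] at this
            · intro hle
              apply hnle
              have hle2 : Subgroup.map (MulAut.conj g).toMonoidHom Q
                  ≤ Subgroup.map (MulAut.conj g).toMonoidHom N2 := by
                rw [normal_map_conj hN2]; exact hle
              exact (Subgroup.map_le_map_iff_of_injective (hconjinj g)).mp hle2
          -- iso between the two semisimple parts
          have hrel := rel_of_map_isoCl_eq _ _ hmmZ
          obtain ⟨isoE⟩ := sup_iso_of_rel Z1f.val Z2f.val hrel Z1f.nodup Z2f.nodup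
            (fun a ha => ((hZ1mem a).mp (Finset.mem_val.mp ha)).1.2)
            (fun a ha => ((hZ2mem a).mp (Finset.mem_val.mp ha)).1.2)
            (fun a ha b hb hne => comp_commute
              ((hZ1mem a).mp (Finset.mem_val.mp ha)).1.1
              ((hZ1mem a).mp (Finset.mem_val.mp ha)).1.2 b
              ((hZ1mem b).mp (Finset.mem_val.mp hb)).1.1
              ((hZ1mem b).mp (Finset.mem_val.mp hb)).1.2 hne)
            (fun a ha b hb hne => comp_commute
              ((hZ2mem a).mp (Finset.mem_val.mp ha)).1.1
              ((hZ2mem a).mp (Finset.mem_val.mp ha)).1.2 b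
              ((hZ2mem b).mp (Finset.mem_val.mp hb)).1.1
              ((hZ2mem b).mp (Finset.mem_val.mp hb)).1.2 hne)
          -- internal direct products
          have hcomm21 : ∀ h ∈ Z2f.val.sup, ∀ k ∈ N1, Commute h k := fun h hh k hk =>
            (Subgroup.mem_centralizer_iff.mp (hE2cent hh) k hk).symm
          have hcomm12 : ∀ h ∈ Z1f.val.sup, ∀ k ∈ N2, Commute h k := fun h hh k hk =>
            (Subgroup.mem_centralizer_iff.mp (hE1cent hh) k hk).symm
          obtain ⟨i1⟩ := noncommCoprod_sup hcomm21 hE2N1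
          obtain ⟨i2⟩ := noncommCoprod_sup hcomm12 hE1N2
          have isoT : ↥(Z2f.val.sup ⊔ N1) ≃* ↥(Z1f.val.sup ⊔ N2) :=
            i1.trans ((MulEquiv.prodCongr isoE.symm φ).trans i2.symm)
          -- the normal subgroups and instances
          haveI hE2n' := hE2norm
          haveI hE1n' := hE1norm
          haveI hmE2 : (Subgroup.map (QuotientGroup.mk' N1) (Z2f.val.sup)).Normal :=
            hE2norm.map _ (QuotientGroup.mk'_surjective N1)
          haveI hmE1 : (Subgroup.map (QuotientGroup.mk' N2) (Z1f.val.sup)).Normal :=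
            hE1norm.map _ (QuotientGroup.mk'_surjective N2)
          haveI hM1n : (Subgroup.map e1.toMonoidHom
              (Subgroup.map (QuotientGroup.mk' N1) (Z2f.val.sup))).Normal :=
            hmE2.map _ e1.surjective
          haveI hM2n : (Subgroup.map e2.toMonoidHom
              (Subgroup.map (QuotientGroup.mk' N2) (Z1f.val.sup))).Normal :=
            hmE1.map _ e2.surjective
          haveI hT1n : (Z2f.val.sup ⊔ N1).Normal := inferInstance
          haveI hT2n : (Z1f.val.sup ⊔ N2).Normal := inferInstance
          haveI hmT1 : (Subgroup.map (QuotientGroup.mk' N1) (Z2f.val.sup ⊔ N1)).Normal :=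
            hT1n.map _ (QuotientGroup.mk'_surjective N1)
          haveI hmT2 : (Subgroup.map (QuotientGroup.mk' N2) (Z1f.val.sup ⊔ N2)).Normal :=
            hT2n.map _ (QuotientGroup.mk'_surjective N2)
          refine ⟨Subgroup.map e1.toMonoidHom (Subgroup.map (QuotientGroup.mk' N1) (Z2f.val.sup)),
            Subgroup.map e2.toMonoidHom (Subgroup.map (QuotientGroup.mk' N2) (Z1f.val.sup)),
            hM1n, hM2n, ?_, ?_, ⟨?_⟩, ?_⟩
          · intro h
            have h1 : Subgroup.map (QuotientGroup.mk' N1) (Z2f.val.sup) = ⊥ :=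
              Subgroup.map_injective e1.injective (h.trans (Subgroup.map_bot _).symm)
            rw [Subgroup.map_eq_bot_iff, QuotientGroup.ker_mk'] at h1
            exact hE2ne (le_bot_iff.mp (hE2N1 ▸ le_inf le_rfl h1))
          · intro h
            have h1 : Subgroup.map (QuotientGroup.mk' N2) (Z1f.val.sup) = ⊥ :=
              Subgroup.map_injective e2.injective (h.trans (Subgroup.map_bot _).symm)
            rw [Subgroup.map_eq_bot_iff, QuotientGroup.ker_mk'] at h1
            exact hE1ne (le_bot_iff.mp (hE1N2 ▸ le_inf le_rfl h1))
          · have a1 : ↥(Subgroup.map (QuotientGroup.mk' N1) (Z2f.val.sup)) ≃*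
                ↥(Subgroup.map e1.toMonoidHom (Subgroup.map (QuotientGroup.mk' N1)
                  (Z2f.val.sup))) := Subgroup.equivMapOfInjective _ e1.toMonoidHom e1.injective
            have b1 : ↥(Z2f.val.sup) ≃* ↥(Subgroup.map (QuotientGroup.mk' N1) (Z2f.val.sup)) :=
              mapIsoOfDisjointKer _ _ (by rw [QuotientGroup.ker_mk']; exact hE2N1)
            have a2 : ↥(Subgroup.map (QuotientGroup.mk' N2) (Z1f.val.sup)) ≃*
                ↥(Subgroup.map e2.toMonoidHom (Subgroup.map (QuotientGroup.mk' N2)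
                  (Z1f.val.sup))) := Subgroup.equivMapOfInjective _ e2.toMonoidHom e2.injective
            have b2 : ↥(Z1f.val.sup) ≃* ↥(Subgroup.map (QuotientGroup.mk' N2) (Z1f.val.sup)) :=
              mapIsoOfDisjointKer _ _ (by rw [QuotientGroup.ker_mk']; exact hE1N2)
            exact a1.symm.trans (b1.symm.trans (isoE.symm.trans (b2.trans a2)))
          · refine ⟨G, inferInstance, inferInstance, Z2f.val.sup ⊔ N1, Z1f.val.sup ⊔ N2,
              hT1n, hT2n, ⟨isoT⟩, ⟨?_⟩, ⟨?_⟩⟩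
            · have d1 := QuotientGroup.quotientQuotientEquivQuotient N1 (Z2f.val.sup ⊔ N1)
                le_sup_right
              have hmapT1 : Subgroup.map (QuotientGroup.mk' N1) (Z2f.val.sup ⊔ N1)
                  = Subgroup.map (QuotientGroup.mk' N1) (Z2f.val.sup) := by
                rw [Subgroup.map_sup]
                have hb : Subgroup.map (QuotientGroup.mk' N1) N1 = ⊥ := by
                  rw [Subgroup.map_eq_bot_iff, QuotientGroup.ker_mk']
                rw [hb, sup_bot_eq]
              have d2 : ((G ⧸ N1) ⧸ Subgroup.map (QuotientGroup.mk' N1) (Z2f.val.sup)) ≃*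
                  (L1 ⧸ Subgroup.map e1.toMonoidHom (Subgroup.map (QuotientGroup.mk' N1)
                    (Z2f.val.sup))) := QuotientGroup.congr _ _ e1 rfl
              exact d1.symm.trans ((QuotientGroup.quotientMulEquivOfEq hmapT1).trans d2)
            · have d1 := QuotientGroup.quotientQuotientEquivQuotient N2 (Z1f.val.sup ⊔ N2)
                le_sup_right
              have hmapT2 : Subgroup.map (QuotientGroup.mk' N2) (Z1f.val.sup ⊔ N2)
                  = Subgroup.map (QuotientGroup.mk' N2) (Z1f.val.sup) := by
                rw [Subgroup.map_sup]
                have hb : Subgroup.map (QuotientGroup.mk' N2) N2 = ⊥ := by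
                  rw [Subgroup.map_eq_bot_iff, QuotientGroup.ker_mk']
                rw [hb, sup_bot_eq]
              have d2 : ((G ⧸ N2) ⧸ Subgroup.map (QuotientGroup.mk' N2) (Z1f.val.sup)) ≃*
                  (L2 ⧸ Subgroup.map e2.toMonoidHom (Subgroup.map (QuotientGroup.mk' N2)
                    (Z1f.val.sup))) := QuotientGroup.congr _ _ e2 rfl
              exact d1.symm.trans ((QuotientGroup.quotientMulEquivOfEq hmapT2).trans d2)
      · exact doQuot (radIn N1) (radIn_normal N1) hC (radIn_le N1) hinv

end Core

end SimsProof

/-- Corollary 5.4: if every Sims pair `(K1, K2)` of the nontrivial compatible pair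
`(L1, L2)` satisfies `Rad(K1) = 1` or `Rad(K2) = 1`, then there are isomorphic
nontrivial normal subgroups `M1 ⊴ L1`, `M2 ⊴ L2` with `L1 ⧸ M1` and `L2 ⧸ M2`
compatible. -/
theorem quotients_compatible_of_sims_pairs_trivial_radical
    (L1 : Type) [Group L1] [Finite L1] [Nontrivial L1]
    (L2 : Type) [Group L2] [Finite L2] [Nontrivial L2]
    (hcomp : Compatible L1 L2)
    (hrad : ∀ (K1 : Subgroup L1) (K2 : Subgroup L2), IsSimsPair L1 L2 K1 K2 →
      solvableRadical ↥K1 = ⊥ ∨ solvableRadical ↥K2 = ⊥) :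
    ∃ (M1 : Subgroup L1) (M2 : Subgroup L2) (h1 : M1.Normal) (h2 : M2.Normal),
      M1 ≠ ⊥ ∧ M2 ≠ ⊥ ∧ Nonempty (↥M1 ≃* ↥M2) ∧
      (letI := h1; letI := h2; Compatible (L1 ⧸ M1) (L2 ⧸ M2)) := by
  obtain ⟨G, gG, fG, N1, N2, h1, h2, ⟨φ⟩, hq⟩ := hcomp
  letI := gG; letI := fG; letI := h1; letI := h2
  obtain ⟨⟨e1⟩, ⟨e2⟩⟩ := hq
  exact SimsProof.core L1 L2 hrad (Nat.card G) G N1 N2 φ e1 e2 le_rfl
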